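/- arXiv:1005.3984 — 13 statements merged into one kernel-verified Lean document; each statement's English description precedes it below -/
import Mathlib

section
/- If Q is positive definite, then x₀ = Q⁻¹ *ᵥ (∫ t in (0:ℝ)..r, q t *ᵥ p t), i.e. the initial state is recovered exactly from the data p and q. (Reconstruction formula (2.12) of Proposition 2.3.) -/
open MeasureTheory intervalIntegral Matrix

attribute [local instance] Matrix.normedAddCommGroup Matrix.normedSpace

/-- Reconstruction formula (2.12) of Proposition 2.3: if `Q` is positive
definite, then `x₀ = Q⁻¹ *ᵥ ∫ t in 0..r, q t *ᵥ p t`, i.e. the initial state is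
recovered exactly from the data `p` and `q`. -/
theorem stmt_3 (n k : ℕ) (hn : 1 ≤ n) (hk : 1 ≤ k) (r : ℝ) (hr : 0 < r)
    (q : ℝ → Matrix (Fin n) (Fin k) ℝ) (p : ℝ → (Fin k → ℝ))
    (hq : ContinuousOn q (Set.Icc 0 r)) (hp : ContinuousOn p (Set.Icc 0 r))
    (Q : Matrix (Fin n) (Fin n) ℝ) (hQ : Q = ∫ t in (0:ℝ)..r, q t * (q t)ᵀ)
    (x₀ : Fin n → ℝ) (hx₀ : ∀ t ∈ Set.Icc (0:ℝ) r, p t = (q t)ᵀ *ᵥ x₀)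
    (hQpd : Q.PosDef) :
    x₀ = Q⁻¹ *ᵥ (∫ t in (0:ℝ)..r, q t *ᵥ p t) := by
  have huIcc : Set.uIcc (0:ℝ) r = Set.Icc 0 r := Set.uIcc_of_le hr.le
  -- the continuous linear map A ↦ A *ᵥ x₀
  let L : Matrix (Fin n) (Fin n) ℝ →L[ℝ] (Fin n → ℝ) :=
    LinearMap.toContinuousLinearMap
      { toFun := fun A => A *ᵥ x₀
        map_add' := fun A B => Matrix.add_mulVec A B x₀
        map_smul' := fun c A => by simp [Matrix.smul_mulVec] }
  have hInt : @IntervalIntegrable _ PseudoMetricSpace.toUniformSpace.toTopologicalSpace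
      NormedAddGroup.toENormedAddMonoid (fun t => q t * (q t)ᵀ) volume 0 r := by
    apply ContinuousOn.intervalIntegrable
    rw [huIcc]
    exact (Continuous.matrix_mul continuous_id continuous_id.matrix_transpose).comp_continuousOn hq
  have key : (∫ t in (0:ℝ)..r, q t *ᵥ p t) = Q *ᵥ x₀ := by
    have h1 : (∫ t in (0:ℝ)..r, q t *ᵥ p t)
        = ∫ t in (0:ℝ)..r, L (q t * (q t)ᵀ) := by
      apply intervalIntegral.integral_congr
      intro t ht
      rw [huIcc] at ht
      show q t *ᵥ p t = (q t * (q t)ᵀ) *ᵥ x₀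
      rw [hx₀ t ht, Matrix.mulVec_mulVec]
    rw [h1, hQ]
    exact L.intervalIntegral_comp_comm hInt
  have hdet : IsUnit Q.det := hQpd.det_pos.ne'.isUnit
  rw [key, Matrix.mulVec_mulVec, Matrix.nonsing_inv_mul Q hdet, Matrix.one_mulVec]
end

section
/- If Q is not positive definite, then for every ε > 0 there exists ξ ∈ ℝⁿ with ξ ≠ x₀, ‖ξ - x₀‖ ≤ ε, and R ξ = 0; in particular x₀ is not the unique minimizer of R over any open neighbourhood of x₀. (Implication (b) ⇒ (c) of Proposition 2.3, in contrapositive form.) -/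
open MeasureTheory intervalIntegral Matrix

attribute [local instance] Matrix.normedAddCommGroup Matrix.normedSpace

/-- Implication (b) ⇒ (c) of Proposition 2.3 in contrapositive form: if `Q` is
not positive definite, then for every `ε > 0` there is `ξ ≠ x₀` with
`‖ξ - x₀‖ ≤ ε` (Euclidean norm) and `R ξ = 0`; in particular `x₀` is not the
unique minimizer of `R` over any open neighbourhood of `x₀`. -/
theorem stmt_4 (n k : ℕ) (hn : 1 ≤ n) (hk : 1 ≤ k) (r : ℝ) (hr : 0 < r)
    (q : ℝ → Matrix (Fin n) (Fin k) ℝ) (p : ℝ → (Fin k → ℝ))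
    (hq : ContinuousOn q (Set.Icc 0 r)) (hp : ContinuousOn p (Set.Icc 0 r))
    (Q : Matrix (Fin n) (Fin n) ℝ) (hQ : Q = ∫ t in (0:ℝ)..r, q t * (q t)ᵀ)
    (R : (Fin n → ℝ) → ℝ)
    (hR : ∀ ξ : Fin n → ℝ, R ξ = ∫ t in (0:ℝ)..r,
      ‖(EuclideanSpace.equiv (Fin k) ℝ).symm (p t - (q t)ᵀ *ᵥ ξ)‖ ^ 2)
    (x₀ : Fin n → ℝ) (hx₀ : ∀ t ∈ Set.Icc (0:ℝ) r, p t = (q t)ᵀ *ᵥ x₀)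
    (hQpd : ¬ Q.PosDef) :
    ∀ ε > (0:ℝ), ∃ ξ : Fin n → ℝ, ξ ≠ x₀ ∧
      ‖(EuclideanSpace.equiv (Fin n) ℝ).symm (ξ - x₀)‖ ≤ ε ∧ R ξ = 0 := by
  have huIcc : Set.uIcc (0:ℝ) r = Set.Icc 0 r := Set.uIcc_of_le hr.le
  have hqq : ContinuousOn (fun t => q t * (q t)ᵀ) (Set.Icc 0 r) := by
    rw [continuousOn_iff_continuous_restrict] at hq ⊢
    exact hq.matrix_mul hq.matrix_transpose
  have hInt : @IntervalIntegrable _ _ NormedAddGroup.toENormedAddMonoid (fun t => q t * (q t)ᵀ) volume 0 r :=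
    (huIcc ▸ hqq).intervalIntegrable
  -- Q is symmetric
  have hsym : Q.IsHermitian := by
    let L : Matrix (Fin n) (Fin n) ℝ →L[ℝ] Matrix (Fin n) (Fin n) ℝ :=
      LinearMap.toContinuousLinearMap
        { toFun := fun M => Mᵀ,
          map_add' := fun a b => Matrix.transpose_add a b,
          map_smul' := fun c a => Matrix.transpose_smul c a }
    have h1 : (∫ t in (0:ℝ)..r, L (q t * (q t)ᵀ)) = L Q := by
      rw [hQ]; exact L.intervalIntegral_comp_comm hInt
    have h2 : L Q = Qᵀ := rfl
    have h3 : ∀ t, L (q t * (q t)ᵀ) = q t * (q t)ᵀ := by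
      intro t
      show (q t * (q t)ᵀ)ᵀ = q t * (q t)ᵀ
      simp [Matrix.transpose_mul]
    rw [Matrix.IsHermitian, Matrix.conjTranspose_eq_transpose_of_trivial, ← h2, ← h1]
    simp only [h3]
    exact hQ.symm
  -- get a null vector direction
  rw [Matrix.PosDef] at hQpd
  push_neg at hQpd
  obtain ⟨v, hv0, hvQ⟩ := hQpd hsym
  obtain ⟨v, hv0, hvQ⟩ : ∃ v : Fin n → ℝ, v ≠ 0 ∧ star v ⬝ᵥ (Q *ᵥ v) ≤ 0 :=
    ⟨⇑v, by simpa using hv0, by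
      simpa [dotProduct, mulVec, Finsupp.sum_fintype, Finset.mul_sum, mul_assoc] using hvQ⟩
  -- quadratic form equals integral of norms
  have key : v ⬝ᵥ (Q *ᵥ v) = ∫ t in (0:ℝ)..r,
      ‖(EuclideanSpace.equiv (Fin k) ℝ).symm ((q t)ᵀ *ᵥ v)‖ ^ 2 := by
    let L : Matrix (Fin n) (Fin n) ℝ →L[ℝ] ℝ :=
      LinearMap.toContinuousLinearMap
        { toFun := fun M => v ⬝ᵥ (M *ᵥ v),
          map_add' := fun a b => by simp [Matrix.add_mulVec, dotProduct_add],
          map_smul' := fun c a => by simp [Matrix.smul_mulVec, dotProduct_smul] }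
    have h1 : (∫ t in (0:ℝ)..r, L (q t * (q t)ᵀ)) = L Q := by
      rw [hQ]; exact L.intervalIntegral_comp_comm hInt
    have h2 : L Q = v ⬝ᵥ (Q *ᵥ v) := rfl
    rw [← h2, ← h1]
    apply intervalIntegral.integral_congr
    intro t _
    show v ⬝ᵥ ((q t * (q t)ᵀ) *ᵥ v) = ‖(EuclideanSpace.equiv (Fin k) ℝ).symm ((q t)ᵀ *ᵥ v)‖ ^ 2
    rw [← Matrix.mulVec_mulVec, Matrix.dotProduct_mulVec v (q t)]
    have : ∀ w : Fin k → ℝ,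
        ‖(EuclideanSpace.equiv (Fin k) ℝ).symm w‖ ^ 2 = w ⬝ᵥ w := by
      intro w
      rw [EuclideanSpace.norm_eq, Real.sq_sqrt (by positivity)]
      simp [dotProduct, sq]
    rw [this]
    simp [Matrix.mulVec_transpose]
  -- the integrand is nonneg, so the integral is nonneg; with hvQ it's 0
  have hnn : (0:ℝ) ≤ ∫ t in (0:ℝ)..r,
      ‖(EuclideanSpace.equiv (Fin k) ℝ).symm ((q t)ᵀ *ᵥ v)‖ ^ 2 := by
    apply intervalIntegral.integral_nonneg hr.le
    intro t _; positivity
  have hzero : (∫ t in (0:ℝ)..r,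
      ‖(EuclideanSpace.equiv (Fin k) ℝ).symm ((q t)ᵀ *ᵥ v)‖ ^ 2) = 0 := by
    have := hvQ
    simp only [star_trivial] at this
    rw [key] at this
    linarith
  intro ε hε
  have hvnorm : (0:ℝ) < ‖(EuclideanSpace.equiv (Fin n) ℝ).symm v‖ := by
    rw [norm_pos_iff]
    simpa using hv0
  set c : ℝ := ε / ‖(EuclideanSpace.equiv (Fin n) ℝ).symm v‖ with hc
  have hcpos : 0 < c := div_pos hε hvnorm
  refine ⟨x₀ + c • v, ?_, ?_, ?_⟩
  · intro h
    have : c • v = 0 := by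
      have := congrArg (fun y => y - x₀) h
      simpa using this
    exact hv0 (by simpa [smul_eq_zero, hcpos.ne'] using this)
  · have : x₀ + c • v - x₀ = c • v := by abel
    rw [this]
    have : (EuclideanSpace.equiv (Fin n) ℝ).symm (c • v)
        = c • (EuclideanSpace.equiv (Fin n) ℝ).symm v := rfl
    rw [this, norm_smul, Real.norm_of_nonneg hcpos.le, hc]
    rw [div_mul_cancel₀ _ hvnorm.ne']
  · rw [hR]
    have congr1 : (∫ t in (0:ℝ)..r,
        ‖(EuclideanSpace.equiv (Fin k) ℝ).symm (p t - (q t)ᵀ *ᵥ (x₀ + c • v))‖ ^ 2)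
        = ∫ t in (0:ℝ)..r,
        c ^ 2 * ‖(EuclideanSpace.equiv (Fin k) ℝ).symm ((q t)ᵀ *ᵥ v)‖ ^ 2 := by
      apply intervalIntegral.integral_congr
      intro t ht
      rw [huIcc] at ht
      have : p t - (q t)ᵀ *ᵥ (x₀ + c • v) = -(c • ((q t)ᵀ *ᵥ v)) := by
        rw [hx₀ t ht, Matrix.mulVec_add]
        rw [Matrix.mulVec_smul]
        abel
      show ‖(EuclideanSpace.equiv (Fin k) ℝ).symm (p t - (q t)ᵀ *ᵥ (x₀ + c • v))‖ ^ 2 = _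
      rw [this]
      have heq : (EuclideanSpace.equiv (Fin k) ℝ).symm (-(c • ((q t)ᵀ *ᵥ v)))
          = -(c • (EuclideanSpace.equiv (Fin k) ℝ).symm ((q t)ᵀ *ᵥ v)) := rfl
      rw [heq, norm_neg, norm_smul, mul_pow, Real.norm_of_nonneg hcpos.le]
    rw [congr1, intervalIntegral.integral_const_mul, hzero, mul_zero]
end

section
/- For all t ∈ [0, r], p t = (q t)ᵀ *ᵥ x₀, i.e. the output-derived quantity p is a linear function of the unknown initial state x₀ with coefficient matrix q t. (Equation (2.5) of Fact I.) -/
open MeasureTheory intervalIntegral Matrix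

attribute [local instance] Matrix.normedAddCommGroup Matrix.normedSpace

private lemma mulVec_norm_le' {m n : ℕ} (A : Matrix (Fin m) (Fin n) ℝ) (z : Fin n → ℝ) :
    ‖A *ᵥ z‖ ≤ ((n : ℝ) * ‖A‖) * ‖z‖ := by
  rw [pi_norm_le_iff_of_nonneg (by positivity)]
  intro i
  calc ‖(A *ᵥ z) i‖ = ‖∑ j, A i j * z j‖ := by
        simp [Matrix.mulVec, dotProduct]
    _ ≤ ∑ j, ‖A i j * z j‖ := norm_sum_le _ _
    _ ≤ ∑ _j : Fin n, ‖A‖ * ‖z‖ := by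
        refine Finset.sum_le_sum fun j _ => ?_
        rw [norm_mul]
        exact mul_le_mul (A.norm_entry_le_entrywise_sup_norm)
          (norm_le_pi_norm z j) (norm_nonneg _) (norm_nonneg _)
    _ = ((n : ℝ) * ‖A‖) * ‖z‖ := by
        simp [Finset.sum_const, mul_assoc]

set_option maxHeartbeats 1000000 in
/-- Equation (2.5) of Fact I: for all `t ∈ [0, r]`, `p t = (q t)ᵀ *ᵥ x₀`,
i.e. the output-derived quantity `p` is a linear function of the unknown
initial state `x₀` with coefficient matrix `q t`. -/
theorem stmt_7 (n k : ℕ) (hn : 1 ≤ n) (hk : 1 ≤ k) (r : ℝ) (hr : 0 < r)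
    (A : ℝ → Matrix (Fin n) (Fin n) ℝ) (b : ℝ → (Fin n → ℝ))
    (C : ℝ → Matrix (Fin n) (Fin k) ℝ) (f : ℝ → (Fin k → ℝ))
    (hA : ContinuousOn A (Set.Icc 0 r)) (hb : ContinuousOn b (Set.Icc 0 r))
    (hC : ContinuousOn C (Set.Icc 0 r)) (hf : ContinuousOn f (Set.Icc 0 r))
    (x : ℝ → (Fin n → ℝ)) (y : ℝ → (Fin k → ℝ)) (x₀ : Fin n → ℝ)
    (hx : ∀ t ∈ Set.Icc (0:ℝ) r,
      HasDerivWithinAt x (A t *ᵥ x t + b t) (Set.Icc 0 r) t)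
    (hy : ∀ t ∈ Set.Icc (0:ℝ) r,
      HasDerivWithinAt y (f t + (C t)ᵀ *ᵥ x t) (Set.Icc 0 r) t)
    (hx0 : x 0 = x₀)
    (Φ : ℝ → Matrix (Fin n) (Fin n) ℝ)
    (hΦ : ∀ t ∈ Set.Icc (0:ℝ) r, HasDerivWithinAt Φ (A t * Φ t) (Set.Icc 0 r) t)
    (hΦ0 : Φ 0 = 1)
    (θ : ℝ → (Fin n → ℝ))
    (hθ : ∀ t ∈ Set.Icc (0:ℝ) r,
      HasDerivWithinAt θ (A t *ᵥ θ t + b t) (Set.Icc 0 r) t)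
    (hθ0 : θ 0 = 0)
    (q : ℝ → Matrix (Fin n) (Fin k) ℝ)
    (hqdef : ∀ t, q t = ∫ s in (0:ℝ)..t, (Φ s)ᵀ * C s)
    (p : ℝ → (Fin k → ℝ))
    (hpdef : ∀ t, p t = y t - y 0 - (∫ s in (0:ℝ)..t, f s)
      - ∫ s in (0:ℝ)..t, (C s)ᵀ *ᵥ θ s) :
    ∀ t ∈ Set.Icc (0:ℝ) r, p t = (q t)ᵀ *ᵥ x₀ := by
  -- continuity of the solutions
  have hxc : ContinuousOn x (Set.Icc 0 r) := fun s hs => (hx s hs).continuousWithinAt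
  have hθc : ContinuousOn θ (Set.Icc 0 r) := fun s hs => (hθ s hs).continuousWithinAt
  have hΦc : ContinuousOn Φ (Set.Icc 0 r) := fun s hs => (hΦ s hs).continuousWithinAt
  have hyc : ContinuousOn y (Set.Icc 0 r) := fun s hs => (hy s hs).continuousWithinAt
  -- the continuous linear map M ↦ M *ᵥ x₀ on square matrices
  let L0 : Matrix (Fin n) (Fin n) ℝ →L[ℝ] (Fin n → ℝ) :=
    LinearMap.toContinuousLinearMap
      { toFun := fun M => M *ᵥ x₀
        map_add' := fun M N => Matrix.add_mulVec M N x₀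
        map_smul' := fun c M => Matrix.smul_mulVec c M x₀ }
  -- the continuous linear map M ↦ Mᵀ *ᵥ x₀ on n×k matrices
  let L1 : Matrix (Fin n) (Fin k) ℝ →L[ℝ] (Fin k → ℝ) :=
    LinearMap.toContinuousLinearMap
      { toFun := fun M => Mᵀ *ᵥ x₀
        map_add' := fun M N => by
          simp [Matrix.transpose_add, Matrix.add_mulVec]
        map_smul' := fun c M => by
          simp [Matrix.transpose_smul, Matrix.smul_mulVec] }
  -- bound on A
  obtain ⟨M, hM⟩ := (isCompact_Icc (a := (0:ℝ)) (b := r)).exists_bound_of_continuousOn hA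
  set K : NNReal := Real.toNNReal ((n : ℝ) * max M 0) with hK
  -- the (globally defined) vector field
  set v : ℝ → (Fin n → ℝ) → (Fin n → ℝ) := fun s z => A (min (max s 0) r) *ᵥ z with hv
  have hmem : ∀ s : ℝ, min (max s 0) r ∈ Set.Icc (0:ℝ) r := fun s =>
    ⟨le_min (le_max_right _ _) hr.le, min_le_right _ _⟩
  have hlip : ∀ s, LipschitzWith K (v s) := by
    intro s
    have : ∀ z, ‖(A (min (max s 0) r)).mulVecLin z‖ ≤ ((n : ℝ) * max M 0) * ‖z‖ := by
      intro z
      refine le_trans (by simpa using mulVec_norm_le' (A (min (max s 0) r)) z) ?_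
      have h1 : ‖A (min (max s 0) r)‖ ≤ max M 0 := le_trans (hM _ (hmem s)) (le_max_left _ _)
      have := mul_le_mul_of_nonneg_right
        (mul_le_mul_of_nonneg_left h1 (by positivity : (0:ℝ) ≤ (n:ℝ))) (norm_nonneg z)
      linarith
    have := AddMonoidHomClass.lipschitz_of_bound
      ((A (min (max s 0) r)).mulVecLin) ((n : ℝ) * max M 0) this
    exact this
  -- uniqueness: x - θ = Φ • x₀ on [0, r]
  have huniq : Set.EqOn (fun s => x s - θ s) (fun s => Φ s *ᵥ x₀) (Set.Icc 0 r) := by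
    apply ODE_solution_unique_of_mem_Icc_right (s := fun _ => Set.univ)
      (fun s _ => (hlip s).lipschitzOnWith)
    · exact hxc.sub hθc
    · intro s hs
      have hmem' : Set.Icc (0:ℝ) r ∈ nhdsWithin s (Set.Ici s) := by
        refine Filter.mem_of_superset
          (inter_mem_nhdsWithin (Set.Ici s) (Iic_mem_nhds hs.2)) ?_
        rintro u ⟨hu1, hu2⟩
        exact ⟨le_trans hs.1 hu1, hu2⟩
      have hd := ((hx s (Set.mem_Icc_of_Ico hs)).sub
        (hθ s (Set.mem_Icc_of_Ico hs))).mono_of_mem_nhdsWithin hmem'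
      have heq : (A s *ᵥ x s + b s) - (A s *ᵥ θ s + b s) = v s (x s - θ s) := by
        have : min (max s 0) r = s := by
          rw [max_eq_left hs.1, min_eq_left hs.2.le]
        rw [hv]; dsimp only
        rw [this, Matrix.mulVec_sub]
        abel
      rwa [heq] at hd
    · exact fun _ _ => Set.mem_univ _
    · exact (L0.continuous.comp_continuousOn hΦc)
    · intro s hs
      have hmem' : Set.Icc (0:ℝ) r ∈ nhdsWithin s (Set.Ici s) := by
        refine Filter.mem_of_superset
          (inter_mem_nhdsWithin (Set.Ici s) (Iic_mem_nhds hs.2)) ?_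
        rintro u ⟨hu1, hu2⟩
        exact ⟨le_trans hs.1 hu1, hu2⟩
      have hd := (L0.hasFDerivAt.comp_hasDerivWithinAt s
        ((hΦ s (Set.mem_Icc_of_Ico hs)).mono_of_mem_nhdsWithin hmem'))
      have heq : L0 (A s * Φ s) = v s (Φ s *ᵥ x₀) := by
        have hmin : min (max s 0) r = s := by
          rw [max_eq_left hs.1, min_eq_left hs.2.le]
        show (A s * Φ s) *ᵥ x₀ = A (min (max s 0) r) *ᵥ (Φ s *ᵥ x₀)
        rw [hmin, Matrix.mulVec_mulVec]
      rw [← heq]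
      exact hd
    · exact fun _ _ => Set.mem_univ _
    · simp [hx0, hθ0, hΦ0]
  intro t ht
  have ht0 : (0:ℝ) ≤ t := ht.1
  have hIcc : Set.Icc (0:ℝ) t ⊆ Set.Icc 0 r := Set.Icc_subset_Icc le_rfl ht.2
  have huIcc : Set.uIcc (0:ℝ) t = Set.Icc 0 t := Set.uIcc_of_le ht0
  -- integrability facts
  have hCx : ContinuousOn (fun s => (C s)ᵀ *ᵥ x s) (Set.Icc 0 r) := by
    exact (Continuous.matrix_mulVec (continuous_fst.matrix_transpose) continuous_snd
      ).comp_continuousOn (hC.prodMk hxc)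
  have hCθ : ContinuousOn (fun s => (C s)ᵀ *ᵥ θ s) (Set.Icc 0 r) := by
    exact (Continuous.matrix_mulVec (continuous_fst.matrix_transpose) continuous_snd
      ).comp_continuousOn (hC.prodMk hθc)
  have hΦC : ContinuousOn (fun s => (Φ s)ᵀ * C s) (Set.Icc 0 r) := by
    exact (Continuous.matrix_mul (continuous_fst.matrix_transpose) continuous_snd
      ).comp_continuousOn (hΦc.prodMk hC)
  have hint_f : IntervalIntegrable f volume 0 t :=
    (hf.mono (by rw [huIcc]; exact hIcc)).intervalIntegrable
  have hint_Cx : IntervalIntegrable (fun s => (C s)ᵀ *ᵥ x s) volume 0 t :=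
    (hCx.mono (by rw [huIcc]; exact hIcc)).intervalIntegrable
  have hint_Cθ : IntervalIntegrable (fun s => (C s)ᵀ *ᵥ θ s) volume 0 t :=
    (hCθ.mono (by rw [huIcc]; exact hIcc)).intervalIntegrable
  letI : ENormedAddMonoid (Matrix (Fin n) (Fin k) ℝ) :=
    Matrix.normedAddCommGroup.toENormedAddCommMonoid.toENormedAddMonoid
  have hint_ΦC : IntervalIntegrable (fun s => (Φ s)ᵀ * C s) volume 0 t :=
    (hΦC.mono (by rw [huIcc]; exact hIcc)).intervalIntegrable
  -- FTC for y
  have hFTC : (∫ s in (0:ℝ)..t, (f s + (C s)ᵀ *ᵥ x s)) = y t - y 0 := by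
    apply integral_eq_sub_of_hasDeriv_right_of_le ht0 (hyc.mono hIcc)
    · intro s hs
      have hs' : s ∈ Set.Icc (0:ℝ) r := ⟨hs.1.le, (lt_of_lt_of_le hs.2 ht.2).le⟩
      have : Set.Icc (0:ℝ) r ∈ nhds s :=
        Icc_mem_nhds hs.1 (lt_of_lt_of_le hs.2 ht.2)
      exact ((hy s hs').hasDerivAt this).hasDerivWithinAt
    · exact hint_f.add hint_Cx
  have hsplit : (∫ s in (0:ℝ)..t, (f s + (C s)ᵀ *ᵥ x s))
      = (∫ s in (0:ℝ)..t, f s) + ∫ s in (0:ℝ)..t, (C s)ᵀ *ᵥ x s :=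
    integral_add hint_f hint_Cx
  -- compute p t
  have hpt : p t = ∫ s in (0:ℝ)..t, ((C s)ᵀ *ᵥ x s - (C s)ᵀ *ᵥ θ s) := by
    rw [hpdef, ← hFTC, hsplit, integral_sub hint_Cx hint_Cθ]
    abel
  have hEq : Set.EqOn (fun s => (C s)ᵀ *ᵥ x s - (C s)ᵀ *ᵥ θ s)
      (fun s => L1 ((Φ s)ᵀ * C s)) (Set.uIcc 0 t) := by
    intro s hs
    rw [huIcc] at hs
    have hs' := hIcc hs
    have hxθ := huniq hs'
    simp only at hxθ ⊢
    have : (C s)ᵀ *ᵥ x s - (C s)ᵀ *ᵥ θ s = (C s)ᵀ *ᵥ (x s - θ s) := by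
      rw [Matrix.mulVec_sub]
    rw [this, hxθ]
    show (C s)ᵀ *ᵥ (Φ s *ᵥ x₀) = ((Φ s)ᵀ * C s)ᵀ *ᵥ x₀
    rw [Matrix.transpose_mul, Matrix.transpose_transpose, Matrix.mulVec_mulVec]
  rw [hpt, intervalIntegral.integral_congr hEq]
  refine (L1.intervalIntegral_comp_comm hint_ΦC).trans ?_
  rw [hqdef]
  rfl
end

section
/- If x_a and x_b are two solutions of the same linear time-varying system x' t = A t *ᵥ x t + b t on [0, r] whose outputs agree, in the sense that (C t)ᵀ *ᵥ x_a t = (C t)ᵀ *ᵥ x_b t for all t ∈ [0, r], then (q t)ᵀ *ᵥ (x_a 0 - x_b 0) = 0 for all t ∈ [0, r]. (Key step in the proof of implication (b) ⇒ (a) of Proposition 2.3: indistinguishable initial states lie in the common kernel of the matrices (q t)ᵀ.) -/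
open MeasureTheory intervalIntegral Matrix

attribute [local instance] Matrix.normedAddCommGroup Matrix.normedSpace

lemma aux_mulVec_norm_le {n : ℕ} (M : Matrix (Fin n) (Fin n) ℝ) (x : Fin n → ℝ) :
    ‖M *ᵥ x‖ ≤ n * ‖M‖ * ‖x‖ := by
  have h0 : (0:ℝ) ≤ n * ‖M‖ * ‖x‖ := by positivity
  rw [pi_norm_le_iff_of_nonneg h0]
  intro i
  calc ‖(M *ᵥ x) i‖ = ‖∑ j, M i j * x j‖ := rfl
    _ ≤ ∑ j, ‖M i j * x j‖ := norm_sum_le _ _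
    _ ≤ ∑ _j : Fin n, ‖M‖ * ‖x‖ := by
        refine Finset.sum_le_sum fun j _ => ?_
        rw [norm_mul]
        exact mul_le_mul (Matrix.norm_entry_le_entrywise_sup_norm M)
          (norm_le_pi_norm x j) (norm_nonneg _) (norm_nonneg _)
    _ = n * ‖M‖ * ‖x‖ := by simp [mul_assoc]

/-- Key step in the proof of implication (b) ⇒ (a) of Proposition 2.3: if two
solutions of `x' = A x + b` on `[0, r]` have the same output through `(C t)ᵀ`,
then their initial difference lies in the common kernel of the matrices
`(q t)ᵀ`, i.e. `(q t)ᵀ *ᵥ (x_a 0 - x_b 0) = 0` for all `t ∈ [0, r]`. -/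
theorem stmt_8 (n k : ℕ) (hn : 1 ≤ n) (hk : 1 ≤ k) (r : ℝ) (hr : 0 < r)
    (A : ℝ → Matrix (Fin n) (Fin n) ℝ) (b : ℝ → (Fin n → ℝ))
    (C : ℝ → Matrix (Fin n) (Fin k) ℝ)
    (hA : ContinuousOn A (Set.Icc 0 r)) (hb : ContinuousOn b (Set.Icc 0 r))
    (hC : ContinuousOn C (Set.Icc 0 r))
    (xa xb : ℝ → (Fin n → ℝ))
    (hxa : ∀ t ∈ Set.Icc (0:ℝ) r,
      HasDerivWithinAt xa (A t *ᵥ xa t + b t) (Set.Icc 0 r) t)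
    (hxb : ∀ t ∈ Set.Icc (0:ℝ) r,
      HasDerivWithinAt xb (A t *ᵥ xb t + b t) (Set.Icc 0 r) t)
    (Φ : ℝ → Matrix (Fin n) (Fin n) ℝ)
    (hΦ : ∀ t ∈ Set.Icc (0:ℝ) r, HasDerivWithinAt Φ (A t * Φ t) (Set.Icc 0 r) t)
    (hΦ0 : Φ 0 = 1)
    (q : ℝ → Matrix (Fin n) (Fin k) ℝ)
    (hqdef : ∀ t, q t = ∫ s in (0:ℝ)..t, (Φ s)ᵀ * C s)
    (hout : ∀ t ∈ Set.Icc (0:ℝ) r, (C t)ᵀ *ᵥ xa t = (C t)ᵀ *ᵥ xb t) :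
    ∀ t ∈ Set.Icc (0:ℝ) r, (q t)ᵀ *ᵥ (xa 0 - xb 0) = 0 := by
  intro t ht
  set c : Fin n → ℝ := xa 0 - xb 0 with hc
  set y : ℝ → (Fin n → ℝ) := fun s => xa s - xb s with hy
  -- derivative of y
  have hyderiv : ∀ s ∈ Set.Icc (0:ℝ) r,
      HasDerivWithinAt y (A s *ᵥ y s) (Set.Icc 0 r) s := by
    intro s hs
    have := (hxa s hs).sub (hxb s hs)
    convert this using 1
    · rfl
    · rfl
    · rfl
    · rfl
    · simp [hy, Matrix.mulVec_sub]
  -- z s = Φ s *ᵥ c, derivative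
  set z : ℝ → (Fin n → ℝ) := fun s => Φ s *ᵥ c with hz
  have hzderiv : ∀ s ∈ Set.Icc (0:ℝ) r,
      HasDerivWithinAt z (A s *ᵥ z s) (Set.Icc 0 r) s := by
    intro s hs
    let L : Matrix (Fin n) (Fin n) ℝ →ₗ[ℝ] (Fin n → ℝ) :=
      { toFun := fun M => M *ᵥ c
        map_add' := fun M N => Matrix.add_mulVec M N c
        map_smul' := fun a M => Matrix.smul_mulVec a M c }
    have hL := (L.toContinuousLinearMap.hasFDerivAt).comp_hasDerivWithinAt s (hΦ s hs)
    have : L.toContinuousLinearMap (A s * Φ s) = A s *ᵥ z s := by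
      simp [L, hz, Matrix.mulVec_mulVec]
    convert hL using 1
    · rfl
    · rfl
    · rfl
    · rfl
    · exact this.symm
  -- uniqueness: y = z on [0, r]
  have hΦcont : ContinuousOn Φ (Set.Icc 0 r) := fun s hs => (hΦ s hs).continuousWithinAt
  obtain ⟨M, hM⟩ := (isCompact_Icc.exists_bound_of_continuousOn hA)
  have hM0 : (0:ℝ) ≤ M := le_trans (norm_nonneg _) (hM 0 ⟨le_rfl, hr.le⟩)
  set clamp : ℝ → ℝ := fun s => max 0 (min s r) with hclamp
  have hclmem : ∀ s, clamp s ∈ Set.Icc (0:ℝ) r :=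
    fun s => ⟨le_max_left _ _, max_le (by linarith) (min_le_right _ _)⟩
  have hcleq : ∀ s ∈ Set.Icc (0:ℝ) r, clamp s = s := by
    intro s hs
    simp [hclamp, min_eq_left hs.2, max_eq_right hs.1]
  set v : ℝ → (Fin n → ℝ) → (Fin n → ℝ) := fun s x => A (clamp s) *ᵥ x with hv
  have hlip : ∀ s : ℝ,
      LipschitzOnWith ((n * M).toNNReal) (v s) Set.univ := by
    intro s
    rw [lipschitzOnWith_iff_dist_le_mul]
    intro x _ xy _
    have h1 : dist (v s x) (v s xy) = ‖A (clamp s) *ᵥ (x - xy)‖ := by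
      rw [dist_eq_norm, hv, ← Matrix.mulVec_sub]
    rw [h1, dist_eq_norm]
    calc ‖A (clamp s) *ᵥ (x - xy)‖ ≤ n * ‖A (clamp s)‖ * ‖x - xy‖ := aux_mulVec_norm_le _ _
      _ ≤ n * M * ‖x - xy‖ := by
          have := hM (clamp s) (hclmem s)
          gcongr
      _ ≤ Real.toNNReal (n * M) * ‖x - xy‖ := by
          gcongr; exact Real.le_coe_toNNReal _
  have key : ∀ t ∈ Set.Ico (0:ℝ) r, Set.Icc (0:ℝ) r ∈ nhdsWithin t (Set.Ici t) := by
    intro s hs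
    exact Filter.mem_of_superset (Icc_mem_nhdsGE_of_mem ⟨le_rfl, hs.2⟩)
      (Set.Icc_subset_Icc hs.1 le_rfl)
  have huniq : Set.EqOn y z (Set.Icc 0 r) := by
    have hvy : ∀ s ∈ Set.Ico (0:ℝ) r, HasDerivWithinAt y (v s (y s)) (Set.Ici s) s := by
      intro s hs
      have : v s (y s) = A s *ᵥ y s := by rw [hv]; simp only; rw [hcleq s ⟨hs.1, hs.2.le⟩]
      rw [this]
      exact (hyderiv s ⟨hs.1, hs.2.le⟩).mono_of_mem_nhdsWithin (key s hs)
    have hvz : ∀ s ∈ Set.Ico (0:ℝ) r, HasDerivWithinAt z (v s (z s)) (Set.Ici s) s := by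
      intro s hs
      have : v s (z s) = A s *ᵥ z s := by rw [hv]; simp only; rw [hcleq s ⟨hs.1, hs.2.le⟩]
      rw [this]
      exact (hzderiv s ⟨hs.1, hs.2.le⟩).mono_of_mem_nhdsWithin (key s hs)
    refine ODE_solution_unique_of_mem_Icc_right (fun s _ => hlip s)
      (fun s hs => (hyderiv s hs).continuousWithinAt)
      hvy
      (fun _ _ => Set.mem_univ _)
      (fun s hs => (hzderiv s hs).continuousWithinAt)
      hvz
      (fun _ _ => Set.mem_univ _) ?_
    simp [hy, hz, hΦ0, hc]
  -- now compute (q t)ᵀ *ᵥ c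
  let G : Matrix (Fin n) (Fin k) ℝ →ₗ[ℝ] (Fin k → ℝ) :=
    { toFun := fun M => Mᵀ *ᵥ c
      map_add' := fun M N => by
        show (M + N)ᵀ *ᵥ c = Mᵀ *ᵥ c + Nᵀ *ᵥ c
        rw [Matrix.transpose_add, Matrix.add_mulVec]
      map_smul' := fun a M => by
        show (a • M)ᵀ *ᵥ c = a • (Mᵀ *ᵥ c)
        rw [Matrix.transpose_smul, Matrix.smul_mulVec] }
  have hsub : Set.uIcc (0:ℝ) t ⊆ Set.Icc 0 r := by
    rw [Set.uIcc_of_le ht.1]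
    exact Set.Icc_subset_Icc le_rfl ht.2
  have hint : @IntervalIntegrable (Matrix (Fin n) (Fin k) ℝ) UniformSpace.toTopologicalSpace NormedAddGroup.toENormedAddMonoid (fun s => (Φ s)ᵀ * C s) volume 0 t := by
    apply ContinuousOn.intervalIntegrable
    have hF : Continuous (fun p : Matrix (Fin n) (Fin n) ℝ × Matrix (Fin n) (Fin k) ℝ =>
        p.1ᵀ * p.2) := (continuous_fst.matrix_transpose).matrix_mul continuous_snd
    exact hF.comp_continuousOn ((hΦcont.mono hsub).prodMk (hC.mono hsub))
  have := (G.toContinuousLinearMap).intervalIntegral_comp_comm hint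
  have hqt : (q t)ᵀ *ᵥ c = ∫ s in (0:ℝ)..t, ((Φ s)ᵀ * C s)ᵀ *ᵥ c := by
    rw [hqdef t]
    calc (∫ s in (0:ℝ)..t, (Φ s)ᵀ * C s)ᵀ *ᵥ c
        = G.toContinuousLinearMap (∫ s in (0:ℝ)..t, (Φ s)ᵀ * C s) := rfl
      _ = ∫ s in (0:ℝ)..t, G.toContinuousLinearMap ((Φ s)ᵀ * C s) := this.symm
      _ = ∫ s in (0:ℝ)..t, ((Φ s)ᵀ * C s)ᵀ *ᵥ c := rfl
  rw [hqt]
  have hzero : ∀ s ∈ Set.uIcc (0:ℝ) t, ((Φ s)ᵀ * C s)ᵀ *ᵥ c = 0 := by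
    intro s hs
    have hs' : s ∈ Set.Icc (0:ℝ) r := hsub hs
    have : ((Φ s)ᵀ * C s)ᵀ *ᵥ c = (C s)ᵀ *ᵥ (Φ s *ᵥ c) := by
      rw [Matrix.transpose_mul, Matrix.transpose_transpose, Matrix.mulVec_mulVec]
    rw [this]
    have h2 : (C s)ᵀ *ᵥ (Φ s *ᵥ c) = (C s)ᵀ *ᵥ y s := by rw [huniq hs']
    rw [h2]
    have h3 := hout s hs'
    simp only [hy]
    rw [Matrix.mulVec_sub, h3, sub_self]
  calc (∫ s in (0:ℝ)..t, ((Φ s)ᵀ * C s)ᵀ *ᵥ c)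
      = ∫ s in (0:ℝ)..t, (0 : Fin k → ℝ) := by
        apply intervalIntegral.integral_congr
        intro s hs
        exact hzero s hs
    _ = 0 := intervalIntegral.integral_zero
end

section
/- Suppose there exist times t₀, t₁, …, t_{n-1} ∈ [0, r] such that the n × n matrix whose i-th row is the row vector (C tᵢ)ᵀ *ᵥ applied through Φ tᵢ, i.e. the vector (Φ tᵢ)ᵀ *ᵥ C tᵢ viewed as a row, has nonzero determinant. Then the matrix Q := ∫ t in (0:ℝ)..r, fun i j => q t i * q t j is positive definite and x₀ = Q⁻¹ *ᵥ (∫ t in (0:ℝ)..r, p t • q t). (Corollary 2.5: sufficient determinant condition for exact state reconstruction in the single-output case k = 1.) -/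
open MeasureTheory intervalIntegral Matrix

attribute [local instance] Matrix.normedAddCommGroup Matrix.normedSpace

namespace Stmt9Aux

variable {n : ℕ}

noncomputable def dotCLM (w : Fin n → ℝ) : (Fin n → ℝ) →L[ℝ] ℝ :=
  LinearMap.toContinuousLinearMap
    { toFun := fun v => v ⬝ᵥ w
      map_add' := fun a c => by simp [add_dotProduct]
      map_smul' := fun r a => by simp [smul_dotProduct] }

@[simp] lemma dotCLM_apply (w v : Fin n → ℝ) : dotCLM w v = v ⬝ᵥ w := rfl

noncomputable def dotCLM' (w : Fin n → ℝ) : (Fin n → ℝ) →L[ℝ] ℝ :=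
  LinearMap.toContinuousLinearMap
    { toFun := fun v => w ⬝ᵥ v
      map_add' := fun a c => by simp [dotProduct_add]
      map_smul' := fun r a => by simp [dotProduct_smul] }

@[simp] lemma dotCLM'_apply (w v : Fin n → ℝ) : dotCLM' w v = w ⬝ᵥ v := rfl

noncomputable def mulVecCLM (w : Fin n → ℝ) : Matrix (Fin n) (Fin n) ℝ →L[ℝ] (Fin n → ℝ) :=
  LinearMap.toContinuousLinearMap
    { toFun := fun M => M *ᵥ w
      map_add' := fun M N => Matrix.add_mulVec M N w
      map_smul' := fun r M => Matrix.smul_mulVec r M w }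

@[simp] lemma mulVecCLM_apply (w : Fin n → ℝ) (M : Matrix (Fin n) (Fin n) ℝ) :
    mulVecCLM w M = M *ᵥ w := rfl

noncomputable def entryCLM (i j : Fin n) : Matrix (Fin n) (Fin n) ℝ →L[ℝ] ℝ :=
  LinearMap.toContinuousLinearMap
    { toFun := fun M => M i j
      map_add' := fun M N => rfl
      map_smul' := fun r M => rfl }

@[simp] lemma entryCLM_apply (i j : Fin n) (M : Matrix (Fin n) (Fin n) ℝ) :
    entryCLM i j M = M i j := rfl

lemma norm_mulVec_le (M : Matrix (Fin n) (Fin n) ℝ) (v : Fin n → ℝ) :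
    ‖M *ᵥ v‖ ≤ (n : ℝ) * ‖M‖ * ‖v‖ := by
  rw [pi_norm_le_iff_of_nonneg (by positivity)]
  intro i
  calc ‖(M *ᵥ v) i‖ = ‖∑ j, M i j * v j‖ := rfl
    _ ≤ ∑ j, ‖M i j * v j‖ := norm_sum_le _ _
    _ ≤ ∑ _j : Fin n, ‖M‖ * ‖v‖ := by
        refine Finset.sum_le_sum fun j _ => ?_
        rw [norm_mul]
        exact mul_le_mul (M.norm_entry_le_entrywise_sup_norm) (norm_le_pi_norm v j)
          (norm_nonneg _) (norm_nonneg _)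
    _ = (n : ℝ) * ‖M‖ * ‖v‖ := by simp [Finset.sum_const, mul_assoc]

lemma cont_mulVecT {Φ : ℝ → Matrix (Fin n) (Fin n) ℝ} {C : ℝ → Fin n → ℝ} {s : Set ℝ}
    (hΦ : ContinuousOn Φ s) (hC : ContinuousOn C s) :
    ContinuousOn (fun t => (Φ t)ᵀ *ᵥ C t) s := by
  apply continuousOn_pi.2
  intro i
  show ContinuousOn (fun t => ∑ j, (Φ t)ᵀ i j * C t j) s
  refine continuousOn_finset_sum _ fun j _ => ?_
  exact (((continuous_apply i).comp (continuous_apply j)).comp_continuousOn hΦ).mul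
    ((continuous_apply j).comp_continuousOn hC)

lemma cont_dot {C θ : ℝ → Fin n → ℝ} {s : Set ℝ}
    (hC : ContinuousOn C s) (hθ : ContinuousOn θ s) :
    ContinuousOn (fun t => C t ⬝ᵥ θ t) s := by
  show ContinuousOn (fun t => ∑ j, C t j * θ t j) s
  refine continuousOn_finset_sum _ fun j _ => ?_
  exact ((continuous_apply j).comp_continuousOn hC).mul
    ((continuous_apply j).comp_continuousOn hθ)

lemma cont_outer {q : ℝ → Fin n → ℝ} {s : Set ℝ} (hq : ContinuousOn q s) :
    ContinuousOn (fun t => (Matrix.of fun i j => q t i * q t j : Matrix (Fin n) (Fin n) ℝ)) s := by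
  apply continuousOn_pi.2
  intro i
  apply continuousOn_pi.2
  intro j
  exact ((continuous_apply i).comp_continuousOn hq).mul
    ((continuous_apply j).comp_continuousOn hq)

lemma outer_mulVec (a c : Fin n → ℝ) :
    (Matrix.of fun i j => a i * a j) *ᵥ c = (a ⬝ᵥ c) • a := by
  funext i
  simp only [Matrix.mulVec, dotProduct, Matrix.of_apply, Pi.smul_apply, smul_eq_mul]
  rw [Finset.sum_mul]
  exact Finset.sum_congr rfl fun j _ => by ring

lemma primitive_hasDerivWithinAt_Ici {E : Type*} [NormedAddCommGroup E] [NormedSpace ℝ E]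
    [CompleteSpace E] {h : ℝ → E} {r t : ℝ} (hc : ContinuousOn h (Set.Icc 0 r))
    (ht : t ∈ Set.Ico 0 r) :
    HasDerivWithinAt (fun u => ∫ s in (0:ℝ)..u, h s) (h t) (Set.Ici t) t := by
  have hmem : Set.Icc (0:ℝ) r ∈ nhdsWithin t (Set.Ici t) := Icc_mem_nhdsGE_of_mem ht
  have hmem' : Set.Icc (0:ℝ) r ∈ nhdsWithin t (Set.Ioi t) :=
    nhdsWithin_mono _ Set.Ioi_subset_Ici_self hmem
  refine intervalIntegral.integral_hasDerivWithinAt_right (t := Set.Ioi t) ?_ ?_ ?_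
  · refine (hc.mono ?_).intervalIntegrable
    rw [Set.uIcc_of_le ht.1]
    exact Set.Icc_subset_Icc_right ht.2.le
  · exact ⟨Set.Icc 0 r, hmem', hc.aestronglyMeasurable measurableSet_Icc⟩
  · exact (hc t ⟨ht.1, ht.2.le⟩).mono_of_mem_nhdsWithin hmem'

lemma primitive_hasDerivWithinAt_Iic {E : Type*} [NormedAddCommGroup E] [NormedSpace ℝ E]
    [CompleteSpace E] {h : ℝ → E} {r : ℝ} (hc : ContinuousOn h (Set.Icc 0 r)) (hr : 0 < r) :
    HasDerivWithinAt (fun u => ∫ s in (0:ℝ)..u, h s) (h r) (Set.Iic r) r := by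
  have hmem : Set.Icc (0:ℝ) r ∈ nhdsWithin r (Set.Iic r) := Icc_mem_nhdsLE hr
  refine intervalIntegral.integral_hasDerivWithinAt_right (t := Set.Iic r) ?_ ?_ ?_
  · exact (hc.mono (by rw [Set.uIcc_of_le hr.le])).intervalIntegrable
  · exact ⟨Set.Icc 0 r, hmem, hc.aestronglyMeasurable measurableSet_Icc⟩
  · exact (hc r ⟨hr.le, le_rfl⟩).mono_of_mem_nhdsWithin hmem

end Stmt9Aux

open Stmt9Aux

/-- Corollary 2.5 (single-output case `k = 1`): if there are times
`ts 0, …, ts (n-1) ∈ [0, r]` such that the `n × n` matrix whose `i`-th row is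
the vector `(Φ (ts i))ᵀ *ᵥ C (ts i)` has nonzero determinant, then the matrix
`Q = ∫ t in 0..r, (fun i j => q t i * q t j)` is positive definite and
`x₀ = Q⁻¹ *ᵥ ∫ t in 0..r, p t • q t`. -/
theorem stmt_9 (n : ℕ) (hn : 1 ≤ n) (r : ℝ) (hr : 0 < r)
    (A : ℝ → Matrix (Fin n) (Fin n) ℝ) (b : ℝ → (Fin n → ℝ))
    (C : ℝ → (Fin n → ℝ)) (f : ℝ → ℝ)
    (hA : ContinuousOn A (Set.Icc 0 r)) (hb : ContinuousOn b (Set.Icc 0 r))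
    (hC : ContinuousOn C (Set.Icc 0 r)) (hf : ContinuousOn f (Set.Icc 0 r))
    (x : ℝ → (Fin n → ℝ)) (y : ℝ → ℝ) (x₀ : Fin n → ℝ)
    (hx : ∀ t ∈ Set.Icc (0:ℝ) r,
      HasDerivWithinAt x (A t *ᵥ x t + b t) (Set.Icc 0 r) t)
    (hy : ∀ t ∈ Set.Icc (0:ℝ) r,
      HasDerivWithinAt y (f t + C t ⬝ᵥ x t) (Set.Icc 0 r) t)
    (hx0 : x 0 = x₀)
    (Φ : ℝ → Matrix (Fin n) (Fin n) ℝ)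
    (hΦ : ∀ t ∈ Set.Icc (0:ℝ) r, HasDerivWithinAt Φ (A t * Φ t) (Set.Icc 0 r) t)
    (hΦ0 : Φ 0 = 1)
    (θ : ℝ → (Fin n → ℝ))
    (hθ : ∀ t ∈ Set.Icc (0:ℝ) r,
      HasDerivWithinAt θ (A t *ᵥ θ t + b t) (Set.Icc 0 r) t)
    (hθ0 : θ 0 = 0)
    (q : ℝ → (Fin n → ℝ))
    (hqdef : ∀ t, q t = ∫ s in (0:ℝ)..t, (Φ s)ᵀ *ᵥ C s)
    (p : ℝ → ℝ)
    (hpdef : ∀ t, p t = y t - y 0 - (∫ s in (0:ℝ)..t, f s)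
      - ∫ s in (0:ℝ)..t, C s ⬝ᵥ θ s)
    (Q : Matrix (Fin n) (Fin n) ℝ)
    (hQ : Q = ∫ t in (0:ℝ)..r, (Matrix.of fun i j => q t i * q t j))
    (ts : Fin n → ℝ) (hts : ∀ i, ts i ∈ Set.Icc (0:ℝ) r)
    (hdet : (Matrix.of fun i j => ((Φ (ts i))ᵀ *ᵥ C (ts i)) j).det ≠ 0) :
    Q.PosDef ∧ x₀ = Q⁻¹ *ᵥ (∫ t in (0:ℝ)..r, p t • q t) := by
  have huIcc : Set.uIcc (0:ℝ) r = Set.Icc 0 r := Set.uIcc_of_le hr.le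
  -- continuity of the given solutions
  have hΦc : ContinuousOn Φ (Set.Icc 0 r) := fun t ht => (hΦ t ht).continuousWithinAt
  have hxc : ContinuousOn x (Set.Icc 0 r) := fun t ht => (hx t ht).continuousWithinAt
  have hθc : ContinuousOn θ (Set.Icc 0 r) := fun t ht => (hθ t ht).continuousWithinAt
  have hyc : ContinuousOn y (Set.Icc 0 r) := fun t ht => (hy t ht).continuousWithinAt
  set g : ℝ → Fin n → ℝ := fun s => (Φ s)ᵀ *ᵥ C s with hgdef
  have hgc : ContinuousOn g (Set.Icc 0 r) := cont_mulVecT hΦc hC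
  have hqfun : q = fun u => ∫ s in (0:ℝ)..u, g s := funext hqdef
  have hqc : ContinuousOn q (Set.Icc 0 r) := by
    rw [hqfun, ← huIcc]
    exact continuousOn_primitive_interval (huIcc ▸ hgc.integrableOn_Icc)
  have hqCDot : ∀ w : Fin n → ℝ, ContinuousOn (fun t => q t ⬝ᵥ w) (Set.Icc 0 r) := fun w =>
    (dotCLM w).continuous.comp_continuousOn hqc
  -- the candidate solution z = Φ • x₀ + θ and uniqueness x = z on [0, r]
  set z : ℝ → Fin n → ℝ := fun t => Φ t *ᵥ x₀ + θ t with hzdef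
  have hzc : ContinuousOn z (Set.Icc 0 r) :=
    ((mulVecCLM x₀).continuous.comp_continuousOn hΦc).add hθc
  have hz' : ∀ t ∈ Set.Icc (0:ℝ) r,
      HasDerivWithinAt z (A t *ᵥ z t + b t) (Set.Icc 0 r) t := by
    intro t ht
    have h1 := ((mulVecCLM x₀).hasFDerivAt.comp_hasDerivWithinAt t (hΦ t ht)).add (hθ t ht)
    convert h1 using 1
    iterate 4 rfl
    simp only [mulVecCLM_apply, hzdef]
    rw [Matrix.mulVec_add]
    change _ = (A t * Φ t) *ᵥ x₀ + _
    rw [← Matrix.mulVec_mulVec]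
    abel
  obtain ⟨K, hK⟩ := isCompact_Icc.exists_bound_of_continuousOn hA
  set L : NNReal := Real.toNNReal ((n : ℝ) * K) with hL
  set π : ℝ → ℝ := fun t => max 0 (min t r) with hπ
  have hπI : ∀ t, π t ∈ Set.Icc (0:ℝ) r := fun t =>
    ⟨le_max_left _ _, max_le hr.le (min_le_right _ _)⟩
  have hπeq : ∀ t ∈ Set.Icc (0:ℝ) r, π t = t := by
    intro t ht
    simp only [hπ]
    rw [min_eq_left ht.2, max_eq_right ht.1]
  set v : ℝ → (Fin n → ℝ) → (Fin n → ℝ) := fun t w => A (π t) *ᵥ w + b (π t) with hv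
  have hLip : ∀ t, LipschitzOnWith L (v t) Set.univ := by
    intro t
    apply LipschitzWith.lipschitzOnWith
    apply LipschitzWith.of_dist_le_mul
    intro w₁ w₂
    simp only [hv, dist_eq_norm]
    have heq : A (π t) *ᵥ w₁ + b (π t) - (A (π t) *ᵥ w₂ + b (π t)) = A (π t) *ᵥ (w₁ - w₂) := by
      rw [Matrix.mulVec_sub]; abel
    rw [heq]
    calc ‖A (π t) *ᵥ (w₁ - w₂)‖ ≤ (n : ℝ) * ‖A (π t)‖ * ‖w₁ - w₂‖ := norm_mulVec_le _ _
      _ ≤ (L : ℝ) * ‖w₁ - w₂‖ := by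
          refine mul_le_mul_of_nonneg_right ?_ (norm_nonneg _)
          calc (n:ℝ) * ‖A (π t)‖ ≤ (n:ℝ) * K :=
                mul_le_mul_of_nonneg_left (hK _ (hπI t)) (Nat.cast_nonneg n)
            _ ≤ (L : ℝ) := Real.le_coe_toNNReal _
  have hxz : Set.EqOn x z (Set.Icc 0 r) := by
    apply ODE_solution_unique_of_mem_Icc_right (fun t _ => hLip t) hxc ?_ (fun t _ => trivial) hzc ?_
      (fun t _ => trivial) ?_
    · intro t ht
      have h := (hx t ⟨ht.1, ht.2.le⟩).mono_of_mem_nhdsWithin (Icc_mem_nhdsGE_of_mem ht)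
      simpa only [hv, hπeq t ⟨ht.1, ht.2.le⟩] using h
    · intro t ht
      have h := (hz' t ⟨ht.1, ht.2.le⟩).mono_of_mem_nhdsWithin (Icc_mem_nhdsGE_of_mem ht)
      simpa only [hv, hπeq t ⟨ht.1, ht.2.le⟩] using h
    · simp [hzdef, hx0, hΦ0, hθ0, Matrix.one_mulVec]
  -- p t = q t ⬝ᵥ x₀ on [0, r]
  have hCθc : ContinuousOn (fun t => C t ⬝ᵥ θ t) (Set.Icc 0 r) := cont_dot hC hθc
  have hpfun : p = fun t => y t - y 0 - (∫ s in (0:ℝ)..t, f s)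
      - ∫ s in (0:ℝ)..t, C s ⬝ᵥ θ s := funext hpdef
  have hpc : ContinuousOn p (Set.Icc 0 r) := by
    rw [hpfun]
    refine ((hyc.sub continuousOn_const).sub ?_).sub ?_
    · rw [← huIcc]
      exact continuousOn_primitive_interval (huIcc ▸ hf.integrableOn_Icc)
    · rw [← huIcc]
      exact continuousOn_primitive_interval (huIcc ▸ hCθc.integrableOn_Icc)
  have hpq : ∀ t ∈ Set.Icc (0:ℝ) r, p t = q t ⬝ᵥ x₀ := by
    refine eq_of_has_deriv_right_eq (f' := fun t => C t ⬝ᵥ (Φ t *ᵥ x₀)) ?_ ?_ hpc (hqCDot x₀) ?_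
    · intro u hu
      have hyd := (hy u ⟨hu.1, hu.2.le⟩).mono_of_mem_nhdsWithin (Icc_mem_nhdsGE_of_mem hu)
      have hfd := primitive_hasDerivWithinAt_Ici hf hu
      have hCθd := primitive_hasDerivWithinAt_Ici hCθc hu
      have hcomb := ((hyd.sub_const (y 0)).sub hfd).sub hCθd
      rw [hpfun]
      convert hcomb using 1
      · rfl
      have hxu : x u = Φ u *ᵥ x₀ + θ u := hxz ⟨hu.1, hu.2.le⟩
      rw [hxu, dotProduct_add]
      ring
    · intro u hu
      have hqd : HasDerivWithinAt q (g u) (Set.Ici u) u :=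
        hqfun ▸ primitive_hasDerivWithinAt_Ici hgc hu
      have hcomb := (dotCLM x₀).hasFDerivAt.comp_hasDerivWithinAt u hqd
      convert hcomb using 1
      · rfl
      simp only [dotCLM_apply, hgdef]
      rw [Matrix.mulVec_transpose, ← Matrix.dotProduct_mulVec]
    · simp [hpdef, hqdef, intervalIntegral.integral_same, zero_dotProduct]
  -- vanishing lemma
  have hvanish : ∀ w : Fin n → ℝ, (∀ t ∈ Set.Icc (0:ℝ) r, q t ⬝ᵥ w = 0) → w = 0 := by
    intro w hw
    have hgw : ∀ t ∈ Set.Icc (0:ℝ) r, g t ⬝ᵥ w = 0 := by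
      intro t ht
      rcases lt_or_eq_of_le ht.2 with htr | htr
      · -- interior / left endpoint: use right derivative on Icc t r
        have hqd : HasDerivWithinAt q (g t) (Set.Ici t) t :=
          hqfun ▸ primitive_hasDerivWithinAt_Ici hgc ⟨ht.1, htr⟩
        have d1 : HasDerivWithinAt (fun u => q u ⬝ᵥ w) (g t ⬝ᵥ w) (Set.Icc t r) t :=
          (((dotCLM w).hasFDerivAt.comp_hasDerivWithinAt t hqd).mono Set.Icc_subset_Ici_self)
        have d2 : HasDerivWithinAt (fun u => q u ⬝ᵥ w) 0 (Set.Icc t r) t := by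
          have hEq : Set.EqOn (fun u => q u ⬝ᵥ w) (fun _ => (0:ℝ)) (Set.Icc t r) := fun u hu =>
            hw u ⟨le_trans ht.1 hu.1, hu.2⟩
          exact (hasDerivWithinAt_const t _ (0:ℝ)).congr hEq (hEq ⟨le_rfl, htr.le⟩)
        have hud : UniqueDiffWithinAt ℝ (Set.Icc t r) t :=
          (uniqueDiffOn_Icc htr) t ⟨le_rfl, htr.le⟩
        have e1 := d1.derivWithin hud
        have e2 := d2.derivWithin hud
        rw [← e1, e2]
      · -- t = r: use left derivative on Icc 0 r
        subst htr
        have hqd : HasDerivWithinAt q (g t) (Set.Iic t) t :=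
          hqfun ▸ primitive_hasDerivWithinAt_Iic hgc hr
        have d1 : HasDerivWithinAt (fun u => q u ⬝ᵥ w) (g t ⬝ᵥ w) (Set.Icc 0 t) t :=
          (((dotCLM w).hasFDerivAt.comp_hasDerivWithinAt t hqd).mono Set.Icc_subset_Iic_self)
        have d2 : HasDerivWithinAt (fun u => q u ⬝ᵥ w) 0 (Set.Icc 0 t) t := by
          have hEq : Set.EqOn (fun u => q u ⬝ᵥ w) (fun _ => (0:ℝ)) (Set.Icc 0 t) := fun u hu =>
            hw u hu
          exact (hasDerivWithinAt_const t _ (0:ℝ)).congr hEq (hEq ⟨hr.le, le_rfl⟩)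
        have hud : UniqueDiffWithinAt ℝ (Set.Icc 0 t) t :=
          (uniqueDiffOn_Icc hr) t ⟨hr.le, le_rfl⟩
        have e1 := d1.derivWithin hud
        have e2 := d2.derivWithin hud
        rw [← e1, e2]
    set M : Matrix (Fin n) (Fin n) ℝ :=
      Matrix.of fun i j => ((Φ (ts i))ᵀ *ᵥ C (ts i)) j with hM
    have hMw : M *ᵥ w = 0 := by
      funext i
      exact hgw (ts i) (hts i)
    have h2 := congrArg (fun u => M⁻¹ *ᵥ u) hMw
    simpa [Matrix.mulVec_mulVec, Matrix.nonsing_inv_mul M (isUnit_iff_ne_zero.2 hdet),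
      Matrix.one_mulVec, Matrix.mulVec_zero] using h2
  -- integral identities
  have houterInt :=
    ((cont_outer hqc).mono huIcc.subset).intervalIntegrable (μ := volume)
  have hmulQ : ∀ w : Fin n → ℝ, Q *ᵥ w = ∫ t in (0:ℝ)..r, (q t ⬝ᵥ w) • q t := by
    intro w
    rw [hQ, ← mulVecCLM_apply w]
    refine (ContinuousLinearMap.intervalIntegral_comp_comm (mulVecCLM w) houterInt).symm.trans ?_
    refine intervalIntegral.integral_congr fun t _ => ?_
    change (Matrix.of fun i j => q t i * q t j) *ᵥ w = _
    exact outer_mulVec (q t) w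
  have hsmulInt : ∀ w : Fin n → ℝ,
      IntervalIntegrable (fun t => (q t ⬝ᵥ w) • q t) volume 0 r := fun w =>
    (((hqCDot w).smul hqc).mono huIcc.subset).intervalIntegrable
  have hquad : ∀ w : Fin n → ℝ, w ⬝ᵥ (Q *ᵥ w) = ∫ t in (0:ℝ)..r, (q t ⬝ᵥ w)^2 := by
    intro w
    rw [hmulQ w, ← dotCLM'_apply w, ← ContinuousLinearMap.intervalIntegral_comp_comm _ (hsmulInt w)]
    refine intervalIntegral.integral_congr fun t _ => ?_
    simp only [dotCLM'_apply, dotProduct_smul, smul_eq_mul, sq]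
    rw [dotProduct_comm w (q t)]
  have hQentry : ∀ i j, Q i j = ∫ t in (0:ℝ)..r, q t i * q t j := by
    intro i j
    have h := ContinuousLinearMap.intervalIntegral_comp_comm (entryCLM i j) houterInt
    change (∫ t in (0:ℝ)..r, (Matrix.of fun i j => q t i * q t j : Matrix (Fin n) (Fin n) ℝ) i j) =
      (∫ t in (0:ℝ)..r, (Matrix.of fun i j => q t i * q t j : Matrix (Fin n) (Fin n) ℝ)) i j at h
    rw [hQ, ← h]
    exact intervalIntegral.integral_congr fun t _ => rfl
  have hherm : Q.IsHermitian := by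
    apply Matrix.ext
    intro i j
    simp only [Matrix.conjTranspose_apply, star_trivial]
    rw [hQentry i j, hQentry j i]
    exact intervalIntegral.integral_congr fun t _ => mul_comm _ _
  have hpos : ∀ w : Fin n → ℝ, w ≠ 0 → 0 < star w ⬝ᵥ (Q *ᵥ w) := by
    intro w hwne
    have hsw : star w = w := funext fun i => star_trivial _
    rw [hsw, hquad w]
    obtain ⟨t₁, ht₁, hq₁⟩ : ∃ t₁ ∈ Set.Icc (0:ℝ) r, q t₁ ⬝ᵥ w ≠ 0 := by
      by_contra h
      push_neg at h
      exact hwne (hvanish w h)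
    set G : ℝ → ℝ := fun t => (q t ⬝ᵥ w)^2 with hG
    have hGc : ContinuousOn G (Set.Icc 0 r) := (hqCDot w).pow 2
    have hGi : IntervalIntegrable G volume 0 r := (hGc.mono huIcc.subset).intervalIntegrable
    rw [intervalIntegral.integral_pos_iff_support_of_nonneg_ae'
      (Filter.Eventually.of_forall fun t => sq_nonneg _) hGi]
    refine ⟨hr, ?_⟩
    have hGpos : 0 < G t₁ := lt_of_le_of_ne (sq_nonneg _) (Ne.symm (pow_ne_zero 2 hq₁))
    have hmemf : G ⁻¹' Set.Ioi 0 ∈ nhdsWithin t₁ (Set.Icc 0 r) :=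
      (hGc t₁ ht₁) (Ioi_mem_nhds hGpos)
    rw [mem_nhdsWithin] at hmemf
    obtain ⟨U, hUopen, hUt₁, hUsub⟩ := hmemf
    obtain ⟨δ, hδpos, hδU⟩ := Metric.isOpen_iff.1 hUopen t₁ hUt₁
    set c : ℝ := max 0 (t₁ - δ/2) with hc
    set d : ℝ := min r (t₁ + δ/2) with hd
    have hct₁ : c ≤ t₁ := max_le ht₁.1 (by linarith)
    have ht₁d : t₁ ≤ d := le_min ht₁.2 (by linarith)
    have hcd : c < d := by
      rcases lt_or_eq_of_le ht₁.2 with h1 | h1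
      · exact lt_of_le_of_lt hct₁ (lt_min h1 (by linarith))
      · have : c < t₁ := max_lt (h1 ▸ hr) (by linarith)
        exact lt_of_lt_of_le this ht₁d
    have hsub : Set.Ioo c d ⊆ Function.support G ∩ Set.Ioc 0 r := by
      intro s hs
      have hs0 : 0 < s := lt_of_le_of_lt (le_max_left _ _) hs.1
      have hsr : s ≤ r := le_trans hs.2.le (min_le_left _ _)
      have hsI : s ∈ Set.Icc (0:ℝ) r := ⟨hs0.le, hsr⟩
      have hlb : t₁ - δ/2 ≤ c := le_max_right _ _
      have hub : d ≤ t₁ + δ/2 := min_le_right _ _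
      have hball : s ∈ Metric.ball t₁ δ := by
        rw [Metric.mem_ball, Real.dist_eq, abs_lt]
        constructor <;> [linarith [hs.1, hlb]; linarith [hs.2, hub]]
      have hGs : G s ∈ Set.Ioi 0 := hUsub ⟨hδU hball, hsI⟩
      exact ⟨ne_of_gt hGs, hs0, hsr⟩
    calc (0:ENNReal) < volume (Set.Ioo c d) := by
          rw [Real.volume_Ioo]
          exact ENNReal.ofReal_pos.2 (by linarith)
      _ ≤ volume (Function.support G ∩ Set.Ioc 0 r) := measure_mono hsub
  have hPD : Q.PosDef := Matrix.PosDef.of_dotProduct_mulVec_pos hherm hpos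
  refine ⟨hPD, ?_⟩
  have hQdet : IsUnit Q.det := isUnit_iff_ne_zero.2 (ne_of_gt hPD.det_pos)
  have hQx : Q *ᵥ x₀ = ∫ t in (0:ℝ)..r, p t • q t := by
    rw [hmulQ x₀]
    refine intervalIntegral.integral_congr fun t ht => ?_
    rw [huIcc] at ht
    rw [hpq t ht]
  rw [← hQx, Matrix.mulVec_mulVec, Matrix.nonsing_inv_mul Q hQdet, Matrix.one_mulVec]
end

section
/- If there exists ξ ∈ ℝⁿ with ξ ≠ 0 such that q t ⬝ᵥ ξ = 0 for all t ∈ [0, r], then for every choice of times t₀, t₁, …, t_{n-1} ∈ [0, r], the determinant of the n × n matrix whose i-th row is the vector (Φ tᵢ)ᵀ *ᵥ C tᵢ equals zero. (Equation (2.14) of Remark 2.4.) -/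
open MeasureTheory intervalIntegral Matrix

attribute [local instance] Matrix.normedAddCommGroup Matrix.normedSpace

/-- Equation (2.14) of Remark 2.4 (single-output case `k = 1`): if there is a
nonzero `ξ` with `q t ⬝ᵥ ξ = 0` for all `t ∈ [0, r]`, then for every choice of
times `ts 0, …, ts (n-1) ∈ [0, r]` the determinant of the `n × n` matrix whose
`i`-th row is the vector `(Φ (ts i))ᵀ *ᵥ C (ts i)` vanishes. -/
theorem stmt_10 (n : ℕ) (hn : 1 ≤ n) (r : ℝ) (hr : 0 < r)
    (A : ℝ → Matrix (Fin n) (Fin n) ℝ) (C : ℝ → (Fin n → ℝ))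
    (hA : ContinuousOn A (Set.Icc 0 r)) (hC : ContinuousOn C (Set.Icc 0 r))
    (Φ : ℝ → Matrix (Fin n) (Fin n) ℝ)
    (hΦ : ∀ t ∈ Set.Icc (0:ℝ) r, HasDerivWithinAt Φ (A t * Φ t) (Set.Icc 0 r) t)
    (hΦ0 : Φ 0 = 1)
    (q : ℝ → (Fin n → ℝ))
    (hqdef : ∀ t, q t = ∫ s in (0:ℝ)..t, (Φ s)ᵀ *ᵥ C s)
    (ξ : Fin n → ℝ) (hξ : ξ ≠ 0)
    (hker : ∀ t ∈ Set.Icc (0:ℝ) r, q t ⬝ᵥ ξ = 0) :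
    ∀ ts : Fin n → ℝ, (∀ i, ts i ∈ Set.Icc (0:ℝ) r) →
      (Matrix.of fun i j => ((Φ (ts i))ᵀ *ᵥ C (ts i)) j).det = 0 := by
  -- the integrand
  set F : ℝ → (Fin n → ℝ) := fun s => (Φ s)ᵀ *ᵥ C s with hFdef
  -- continuity of Φ on [0,r]
  have hΦcont : ContinuousOn Φ (Set.Icc 0 r) := fun t ht => (hΦ t ht).continuousWithinAt
  -- continuity of F on [0,r]
  have hF : ContinuousOn F (Set.Icc 0 r) := by
    have : ∀ j, ContinuousOn (fun s => F s j) (Set.Icc (0:ℝ) r) := by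
      intro j
      have : (fun s => F s j) = fun s => ∑ i, Φ s i j * C s i := by
        funext s
        simp [hFdef, Matrix.mulVec, dotProduct, Matrix.transpose_apply]
      rw [this]
      apply continuousOn_finset_sum
      intro i _
      exact (((continuous_apply j).comp (continuous_apply i)).comp_continuousOn hΦcont).mul
        ((continuous_apply i).comp_continuousOn hC)
    exact continuousOn_pi.2 this
  -- continuous extension of F to all of ℝ
  set F' : ℝ → (Fin n → ℝ) := fun s => F ((Set.projIcc 0 r hr.le s : Set.Icc (0:ℝ) r) : ℝ)
    with hF'def
  have hF' : Continuous F' :=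
    hF.comp_continuous (continuous_subtype_val.comp continuous_projIcc)
      (fun x => (Set.projIcc 0 r hr.le x).2)
  have hF'eq : ∀ s ∈ Set.Icc (0:ℝ) r, F' s = F s := by
    intro s hs
    simp [hF'def, Set.projIcc_of_mem hr.le hs]
  -- the scalar functional v ↦ v ⬝ᵥ ξ as a continuous linear map
  set L : (Fin n → ℝ) →L[ℝ] ℝ := ∑ j, ξ j • ContinuousLinearMap.proj j with hLdef
  have hL : ∀ v : Fin n → ℝ, L v = v ⬝ᵥ ξ := by
    intro v
    simp [hLdef, dotProduct, ContinuousLinearMap.sum_apply, mul_comm]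
  -- the primitive
  set G : ℝ → (Fin n → ℝ) := fun u => ∫ s in (0:ℝ)..u, F' s with hGdef
  have hGq : ∀ t ∈ Set.Icc (0:ℝ) r, G t = q t := by
    intro t ht
    rw [hqdef t, hGdef]
    refine intervalIntegral.integral_congr (fun s hs => ?_)
    have hsub : Set.uIcc (0:ℝ) t ⊆ Set.Icc 0 r := by
      rw [Set.uIcc_of_le ht.1]
      exact Set.Icc_subset_Icc le_rfl ht.2
    exact hF'eq s (hsub hs)
  -- F t ⬝ᵥ ξ = 0 for all t in [0,r]
  have key : ∀ t ∈ Set.Icc (0:ℝ) r, F t ⬝ᵥ ξ = 0 := by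
    intro t ht
    have hint : IntervalIntegrable F' volume 0 t := hF'.intervalIntegrable 0 t
    have hG : HasDerivAt G (F' t) t :=
      intervalIntegral.integral_hasDerivAt_right hint
        hF'.stronglyMeasurable.stronglyMeasurableAtFilter hF'.continuousAt
    have h1 : HasDerivWithinAt (fun u => L (G u)) (L (F' t)) (Set.Icc 0 r) t :=
      (L.hasFDerivAt.comp_hasDerivWithinAt t hG.hasDerivWithinAt)
    have h2 : HasDerivWithinAt (fun u => L (G u)) 0 (Set.Icc 0 r) t := by
      have hzero : ∀ u ∈ Set.Icc (0:ℝ) r, L (G u) = 0 := by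
        intro u hu
        rw [hGq u hu, hL, hker u hu]
      exact (hasDerivWithinAt_const t (Set.Icc 0 r) (0:ℝ)).congr hzero (hzero t ht)
    have hud : UniqueDiffWithinAt ℝ (Set.Icc (0:ℝ) r) t := (uniqueDiffOn_Icc hr) t ht
    have := hud.eq_deriv _ h1 h2
    rw [hF'eq t ht, hL] at this
    exact this
  -- conclude via the determinant criterion
  intro ts hts
  rw [← Matrix.exists_mulVec_eq_zero_iff]
  refine ⟨ξ, hξ, ?_⟩
  funext i
  have := key (ts i) (hts i)
  simpa [Matrix.mulVec, dotProduct, hFdef] using this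
end

section
/- If c₂ (y 0) * c₁ (y t) * Real.exp (∫ s in (0:ℝ)..t, (a₁ (y s) - a₂ (y s))) = c₁ (y 0) * c₂ (y t) for all t ∈ [0, r], then κ (y t) * y' t + a₁ (y t) - a₂ (y t) = 0 for all t ∈ [0, r], where κ z := c₁' z / c₁ z - c₂' z / c₂ z is the logarithmic-derivative difference d/dz (ln (c₁ z / c₂ z)). (Implication (2.17) ⇒ (2.18) in Example 2.6.) -/
open MeasureTheory intervalIntegral

/-- Implication (2.17) ⇒ (2.18) in Example 2.6: if
`c₂ (y 0) * c₁ (y t) * exp (∫ s in 0..t, a₁ (y s) - a₂ (y s)) = c₁ (y 0) * c₂ (y t)`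
for all `t ∈ [0, r]`, then `κ (y t) * y' t + a₁ (y t) - a₂ (y t) = 0` for all
`t ∈ [0, r]`, where `κ z = c₁' z / c₁ z - c₂' z / c₂ z = (ln (c₁ / c₂))' z`. -/
theorem stmt_11 (r : ℝ) (hr : 0 < r)
    (c₁ c₂ c₁' c₂' : ℝ → ℝ)
    (hc₁ : ∀ z, HasDerivAt c₁ (c₁' z) z) (hc₂ : ∀ z, HasDerivAt c₂ (c₂' z) z)
    (hc₁' : Continuous c₁') (hc₂' : Continuous c₂')
    (hc₁pos : ∀ z, 0 < c₁ z) (hc₂pos : ∀ z, 0 < c₂ z)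
    (a₁ a₂ : ℝ → ℝ) (ha₁ : Continuous a₁) (ha₂ : Continuous a₂)
    (y y' : ℝ → ℝ)
    (hy : ∀ t ∈ Set.Icc (0:ℝ) r, HasDerivWithinAt y (y' t) (Set.Icc 0 r) t)
    (κ : ℝ → ℝ) (hκ : ∀ z, κ z = c₁' z / c₁ z - c₂' z / c₂ z)
    (hid : ∀ t ∈ Set.Icc (0:ℝ) r,
      c₂ (y 0) * c₁ (y t) * Real.exp (∫ s in (0:ℝ)..t, (a₁ (y s) - a₂ (y s))) =
        c₁ (y 0) * c₂ (y t)) :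
    ∀ t ∈ Set.Icc (0:ℝ) r, κ (y t) * y' t + a₁ (y t) - a₂ (y t) = 0 := by
  intro t ht
  set f : ℝ → ℝ := fun s => a₁ (y s) - a₂ (y s) with hf
  have hycont : ContinuousOn y (Set.Icc 0 r) := fun x hx => (hy x hx).continuousWithinAt
  have hfcont : ContinuousOn f (Set.Icc 0 r) :=
    ((ha₁.comp_continuousOn hycont).sub (ha₂.comp_continuousOn hycont))
  set G : ℝ → ℝ := fun u => Real.log (c₁ (y u)) - Real.log (c₂ (y u)) + ∫ s in (0:ℝ)..u, f s
    with hG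
  have h0r : (0:ℝ) ∈ Set.Icc (0:ℝ) r := ⟨le_refl 0, hr.le⟩
  -- G is constant on Icc
  have hGconst : ∀ u ∈ Set.Icc (0:ℝ) r, G u = G 0 := by
    intro u hu
    have h := hid u hu
    have h1 : Real.log (c₂ (y 0) * c₁ (y u) * Real.exp (∫ s in (0:ℝ)..u, f s)) =
        Real.log (c₁ (y 0) * c₂ (y u)) := by rw [h]
    rw [Real.log_mul (mul_pos (hc₂pos _) (hc₁pos _)).ne' (Real.exp_ne_zero _),
        Real.log_mul (hc₂pos (y 0)).ne' (hc₁pos (y u)).ne', Real.log_exp,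
        Real.log_mul (hc₁pos (y 0)).ne' (hc₂pos (y u)).ne'] at h1
    simp only [hG, intervalIntegral.integral_same]
    linarith
  -- derivative of G within Icc at t
  have hint : ∀ u ∈ Set.Icc (0:ℝ) r,
      HasDerivWithinAt (fun u => ∫ s in (0:ℝ)..u, f s) (f u) (Set.Icc 0 r) u := by
    intro u hu
    haveI : Fact (u ∈ Set.Icc (0:ℝ) r) := ⟨hu⟩
    have hii : IntervalIntegrable f volume 0 u := by
      apply (hfcont.mono _).intervalIntegrable
      rw [Set.uIcc_of_le hu.1]
      exact Set.Icc_subset_Icc le_rfl hu.2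
    exact intervalIntegral.integral_hasDerivWithinAt_right hii
      (hfcont.stronglyMeasurableAtFilter_nhdsWithin measurableSet_Icc u)
      (hfcont u hu)
  have hlog1 : HasDerivWithinAt (fun u => Real.log (c₁ (y u)))
      (c₁' (y t) / c₁ (y t) * y' t) (Set.Icc 0 r) t := by
    have := (Real.hasDerivAt_log (hc₁pos (y t)).ne').comp_hasDerivWithinAt t
      ((hc₁ (y t)).comp_hasDerivWithinAt t (hy t ht))
    convert this using 1
    · rfl
    · rfl
    · rfl
    · ring
  have hlog2 : HasDerivWithinAt (fun u => Real.log (c₂ (y u)))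
      (c₂' (y t) / c₂ (y t) * y' t) (Set.Icc 0 r) t := by
    have := (Real.hasDerivAt_log (hc₂pos (y t)).ne').comp_hasDerivWithinAt t
      ((hc₂ (y t)).comp_hasDerivWithinAt t (hy t ht))
    convert this using 1
    · rfl
    · rfl
    · rfl
    · ring
  have hGd : HasDerivWithinAt G
      (c₁' (y t) / c₁ (y t) * y' t - c₂' (y t) / c₂ (y t) * y' t + f t) (Set.Icc 0 r) t :=
    (hlog1.sub hlog2).add (hint t ht)
  have hG0 : HasDerivWithinAt G 0 (Set.Icc 0 r) t :=
    (hasDerivWithinAt_const t (Set.Icc 0 r) (G 0)).congr hGconst (hGconst t ht)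
  have huniq : UniqueDiffWithinAt ℝ (Set.Icc (0:ℝ) r) t := (uniqueDiffOn_Icc hr) t ht
  have : c₁' (y t) / c₁ (y t) * y' t - c₂' (y t) / c₂ (y t) * y' t + f t = 0 := by
    rw [← hGd.derivWithin huniq, hG0.derivWithin huniq]
  rw [hκ]
  simp only [hf] at this
  ring_nf
  ring_nf at this
  linarith
end

section
/- Assume 0 < Tmin ≤ Ts, (J₁ * k₁ * ĉ₁ + J₂ * k₂ * ĉ₂) / h + Ts ≤ Tmax, and: (k₁ / k₂) * ĉ₁ < ĉ₂ in case E₁ ≥ E₂, while (k₁ / k₂) * Real.exp ((E₂ - E₁) / Tmin) * ĉ₁ < ĉ₂ in case E₁ < E₂. If cA, cB, T : ℝ → ℝ are differentiable on [0, τ] (τ > 0), satisfy the batch reactor equations on [0, τ], and (cA 0, cB 0, T 0) ∈ (0, ĉ₁) × (0, ĉ₂) × (Tmin, Tmax), then (cA t, cB t, T t) ∈ (0, ĉ₁) × (0, ĉ₂) × (Tmin, Tmax) for all t ∈ [0, τ]. (Positive invariance of the region D × Ω for the batch reactor, asserted in Application 1.) -/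
open Set Filter Topology

private lemma neBot_Ico_aux {a b : ℝ} (hab : a < b) : (𝓝[Set.Ico a b] b).NeBot := by
  rw [← mem_closure_iff_nhdsWithin_neBot, closure_Ico hab.ne]
  exact Set.right_mem_Icc.2 hab.le

private lemma left_mem_closed_aux {f : ℝ → ℝ} {a b : ℝ} {s : Set ℝ} (hab : a < b)
    (hf : ContinuousWithinAt f (Set.Icc a b) b) (hs : IsClosed s)
    (h : ∀ t ∈ Set.Ico a b, f t ∈ s) : f b ∈ s := by
  have := neBot_Ico_aux hab
  exact hs.mem_of_tendsto (hf.mono Set.Ico_subset_Icc_self)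
    (eventually_nhdsWithin_of_forall h)

private lemma exists_gt_of_deriv_neg_aux {f : ℝ → ℝ} {a b d : ℝ} (hab : a < b) (hd : d < 0)
    (hf : HasDerivWithinAt f d (Set.Icc a b) b) : ∃ t ∈ Set.Ico a b, f b < f t := by
  have hne := neBot_Ico_aux hab
  rw [hasDerivWithinAt_iff_tendsto_slope, Set.Icc_sdiff_right] at hf
  have hev : ∀ᶠ t in 𝓝[Set.Ico a b] b, slope f b t < 0 := hf.eventually (Iio_mem_nhds hd)
  obtain ⟨t, hts, htm⟩ := (hev.and eventually_mem_nhdsWithin).exists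
  refine ⟨t, htm, ?_⟩
  have htb : t - b < 0 := sub_neg.2 htm.2
  rw [slope_def_field] at hts
  by_contra hle
  push_neg at hle
  have h1 : 0 ≤ (f t - f b) / (t - b) := by
    rw [div_nonneg_iff]
    exact Or.inr ⟨by linarith, htb.le⟩
  linarith

private lemma mono_of_hasDeriv_aux {f f' : ℝ → ℝ} {a b : ℝ}
    (hf : ∀ t ∈ Set.Icc a b, HasDerivWithinAt f (f' t) (Set.Icc a b) t)
    (h0 : ∀ t ∈ Set.Ioo a b, 0 ≤ f' t) : MonotoneOn f (Set.Icc a b) := by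
  apply monotoneOn_of_deriv_nonneg (convex_Icc a b)
    (fun t ht => (hf t ht).continuousWithinAt)
  · rw [interior_Icc]
    exact fun t ht => (((hf t (Set.Ioo_subset_Icc_self ht)).hasDerivAt
      (Icc_mem_nhds ht.1 ht.2)).differentiableAt).differentiableWithinAt
  · rw [interior_Icc]
    intro t ht
    rw [((hf t (Set.Ioo_subset_Icc_self ht)).hasDerivAt (Icc_mem_nhds ht.1 ht.2)).deriv]
    exact h0 t ht

private lemma gronwall_pos_aux {f f' : ℝ → ℝ} {a b c : ℝ} (hab : a < b)
    (hf : ∀ t ∈ Set.Icc a b, HasDerivWithinAt f (f' t) (Set.Icc a b) t)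
    (hge : ∀ t ∈ Set.Ioo a b, -(c * f t) ≤ f' t)
    (h0 : 0 < f a) : 0 < f b := by
  have hg' : ∀ t ∈ Set.Icc a b, HasDerivWithinAt (fun t => f t * Real.exp (c * t))
      ((f' t + c * f t) * Real.exp (c * t)) (Set.Icc a b) t := by
    intro t ht
    have h1 : HasDerivWithinAt (fun t : ℝ => Real.exp (c * t)) (c * Real.exp (c * t))
        (Set.Icc a b) t := by
      simpa [mul_comm, Function.comp_def] using
        ((Real.hasDerivAt_exp (c * t)).comp t
          ((hasDerivAt_id t).const_mul c)).hasDerivWithinAt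
    have h2 := (hf t ht).mul h1
    exact h2.congr_deriv (by ring)
  have hmono := mono_of_hasDeriv_aux hg' (fun t ht => by
    have h3 := hge t ht
    have hexp := Real.exp_pos (c * t)
    nlinarith)
  have h4 := hmono (Set.left_mem_Icc.2 hab.le) (Set.right_mem_Icc.2 hab.le) hab.le
  have hfa : 0 < f a * Real.exp (c * a) := mul_pos h0 (Real.exp_pos _)
  have h5 : 0 < f b * Real.exp (c * b) := lt_of_lt_of_le hfa h4
  nlinarith [Real.exp_pos (c * b)]

set_option maxHeartbeats 1600000 in
/-- Positive invariance of the region `D × Ω` for the batch reactor (3.1),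
asserted in Application 1: under the stated parameter conditions, every
solution starting in `(0, chat₁) × (0, chat₂) × (Tmin, Tmax)` stays there. -/
theorem stmt_13 (J₁ J₂ k₁ k₂ h E₁ E₂ Ts chat₁ chat₂ Tmin Tmax : ℝ)
    (hJ₁ : 0 < J₁) (hJ₂ : 0 < J₂) (hk₁ : 0 < k₁) (hk₂ : 0 < k₂) (hh : 0 < h)
    (hE₁ : 0 < E₁) (hE₂ : 0 < E₂) (hTs : 0 < Ts) (hchat₁ : 0 < chat₁) (hchat₂ : 0 < chat₂)
    (hTmin : 0 < Tmin) (hTminTs : Tmin ≤ Ts)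
    (hTmax : (J₁ * k₁ * chat₁ + J₂ * k₂ * chat₂) / h + Ts ≤ Tmax)
    (hcase1 : E₂ ≤ E₁ → (k₁ / k₂) * chat₁ < chat₂)
    (hcase2 : E₁ < E₂ → (k₁ / k₂) * Real.exp ((E₂ - E₁) / Tmin) * chat₁ < chat₂)
    (τ : ℝ) (hτ : 0 < τ) (cA cB T : ℝ → ℝ)
    (hcA : ∀ t ∈ Set.Icc (0:ℝ) τ,
      HasDerivWithinAt cA (-(k₁ * Real.exp (-E₁ / T t)) * cA t) (Set.Icc 0 τ) t)
    (hcB : ∀ t ∈ Set.Icc (0:ℝ) τ,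
      HasDerivWithinAt cB
        (k₁ * Real.exp (-E₁ / T t) * cA t - k₂ * Real.exp (-E₂ / T t) * cB t)
        (Set.Icc 0 τ) t)
    (hT : ∀ t ∈ Set.Icc (0:ℝ) τ,
      HasDerivWithinAt T
        (J₁ * k₁ * Real.exp (-E₁ / T t) * cA t
          + J₂ * k₂ * Real.exp (-E₂ / T t) * cB t + h * (Ts - T t))
        (Set.Icc 0 τ) t)
    (hcA0 : cA 0 ∈ Set.Ioo 0 chat₁) (hcB0 : cB 0 ∈ Set.Ioo 0 chat₂)
    (hT0 : T 0 ∈ Set.Ioo Tmin Tmax) :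
    ∀ t ∈ Set.Icc (0:ℝ) τ,
      cA t ∈ Set.Ioo 0 chat₁ ∧ cB t ∈ Set.Ioo 0 chat₂ ∧ T t ∈ Set.Ioo Tmin Tmax := by
  by_contra hcon
  push_neg at hcon
  obtain ⟨t₀, ht₀, hPt₀⟩ := hcon
  -- the "bad" set
  set O : Set (ℝ × ℝ × ℝ) := Set.Ioo 0 chat₁ ×ˢ Set.Ioo 0 chat₂ ×ˢ Set.Ioo Tmin Tmax with hO
  set F : ℝ → ℝ × ℝ × ℝ := fun t => (cA t, cB t, T t) with hF
  have hFc : ContinuousOn F (Set.Icc 0 τ) := by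
    refine ContinuousOn.prodMk (fun t ht => (hcA t ht).continuousWithinAt) ?_
    exact ContinuousOn.prodMk (fun t ht => (hcB t ht).continuousWithinAt)
      (fun t ht => (hT t ht).continuousWithinAt)
  set S : Set ℝ := Set.Icc 0 τ ∩ F ⁻¹' Oᶜ with hS
  have hSclosed : IsClosed S :=
    hFc.preimage_isClosed_of_isClosed isClosed_Icc
      ((isOpen_Ioo.prod (isOpen_Ioo.prod isOpen_Ioo)).isClosed_compl)
  have hmemS : ∀ t, t ∈ S ↔ t ∈ Set.Icc 0 τ ∧
      ¬(cA t ∈ Set.Ioo 0 chat₁ ∧ cB t ∈ Set.Ioo 0 chat₂ ∧ T t ∈ Set.Ioo Tmin Tmax) := by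
    intro t
    simp only [hS, hO, hF, Set.mem_inter_iff, Set.mem_preimage, Set.mem_compl_iff,
      Set.mem_prod]
  have hSne : S.Nonempty := ⟨t₀, (hmemS t₀).2 ⟨ht₀, fun hc => hPt₀ hc.1 hc.2.1 hc.2.2⟩⟩
  have hSbdd : BddBelow S := ⟨0, fun t ht => ht.1.1⟩
  set ts : ℝ := sInf S with hts
  have htsS : ts ∈ S := hSclosed.csInf_mem hSne hSbdd
  obtain ⟨htsIcc, htsP⟩ := (hmemS ts).1 htsS
  have htspos : 0 < ts := by
    rcases lt_or_eq_of_le htsIcc.1 with h' | h'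
    · exact h'
    · exfalso; exact htsP (by rw [← h']; exact ⟨hcA0, hcB0, hT0⟩)
  have hbefore : ∀ t ∈ Set.Ico 0 ts,
      cA t ∈ Set.Ioo 0 chat₁ ∧ cB t ∈ Set.Ioo 0 chat₂ ∧ T t ∈ Set.Ioo Tmin Tmax := by
    intro t ht
    have htIcc : t ∈ Set.Icc 0 τ := ⟨ht.1, ht.2.le.trans htsIcc.2⟩
    by_contra hP
    exact absurd (csInf_le hSbdd ((hmemS t).2 ⟨htIcc, hP⟩)) (not_le.2 ht.2)
  have hsub : Set.Icc (0:ℝ) ts ⊆ Set.Icc 0 τ := Set.Icc_subset_Icc_right htsIcc.2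
  -- closure bounds at ts
  have hAcl : cA ts ∈ Set.Icc 0 chat₁ :=
    left_mem_closed_aux htspos ((hcA ts htsIcc).continuousWithinAt.mono hsub) isClosed_Icc
      (fun t ht => Set.Ioo_subset_Icc_self (hbefore t ht).1)
  have hBcl : cB ts ∈ Set.Icc 0 chat₂ :=
    left_mem_closed_aux htspos ((hcB ts htsIcc).continuousWithinAt.mono hsub) isClosed_Icc
      (fun t ht => Set.Ioo_subset_Icc_self (hbefore t ht).2.1)
  have hTcl : T ts ∈ Set.Icc Tmin Tmax :=
    left_mem_closed_aux htspos ((hT ts htsIcc).continuousWithinAt.mono hsub) isClosed_Icc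
      (fun t ht => Set.Ioo_subset_Icc_self (hbefore t ht).2.2)
  have hTtspos : 0 < T ts := lt_of_lt_of_le hTmin hTcl.1
  -- restricted derivative hypotheses
  have hcA' : ∀ t ∈ Set.Icc (0:ℝ) ts,
      HasDerivWithinAt cA (-(k₁ * Real.exp (-E₁ / T t)) * cA t) (Set.Icc 0 ts) t :=
    fun t ht => (hcA t (hsub ht)).mono hsub
  have hcB' : ∀ t ∈ Set.Icc (0:ℝ) ts,
      HasDerivWithinAt cB
        (k₁ * Real.exp (-E₁ / T t) * cA t - k₂ * Real.exp (-E₂ / T t) * cB t)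
        (Set.Icc 0 ts) t :=
    fun t ht => (hcB t (hsub ht)).mono hsub
  have hT' : ∀ t ∈ Set.Icc (0:ℝ) ts,
      HasDerivWithinAt T
        (J₁ * k₁ * Real.exp (-E₁ / T t) * cA t
          + J₂ * k₂ * Real.exp (-E₂ / T t) * cB t + h * (Ts - T t))
        (Set.Icc 0 ts) t :=
    fun t ht => (hT t (hsub ht)).mono hsub
  have htsmem : ts ∈ Set.Icc (0:ℝ) ts := Set.right_mem_Icc.2 htspos.le
  -- facts on Ioo 0 ts
  have hIoo : ∀ t ∈ Set.Ioo (0:ℝ) ts, 0 < cA t ∧ cA t < chat₁ ∧ 0 < cB t ∧ cB t < chat₂ ∧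
      Tmin < T t ∧ T t < Tmax := by
    intro t ht
    obtain ⟨h1, h2, h3⟩ := hbefore t ⟨ht.1.le, ht.2⟩
    exact ⟨h1.1, h1.2, h2.1, h2.2, h3.1, h3.2⟩
  -- cA ts > 0
  have hApos : 0 < cA ts := by
    apply gronwall_pos_aux (c := k₁) htspos hcA' _ hcA0.1
    intro t ht
    obtain ⟨hA, _, _, _, hTm, _⟩ := hIoo t ht
    have hTt : 0 < T t := lt_trans hTmin hTm
    have hex : Real.exp (-E₁ / T t) ≤ 1 :=
      Real.exp_le_one_iff.2 (div_nonpos_of_nonpos_of_nonneg (by linarith) hTt.le)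
    nlinarith [mul_nonneg (mul_pos hk₁ hA).le (sub_nonneg.2 hex)]
  -- cB ts > 0
  have hBpos : 0 < cB ts := by
    apply gronwall_pos_aux (c := k₂) htspos hcB' _ hcB0.1
    intro t ht
    obtain ⟨hA, _, hB, _, hTm, _⟩ := hIoo t ht
    have hTt : 0 < T t := lt_trans hTmin hTm
    have hex2 : Real.exp (-E₂ / T t) ≤ 1 :=
      Real.exp_le_one_iff.2 (div_nonpos_of_nonpos_of_nonneg (by linarith) hTt.le)
    have hex1 : 0 < Real.exp (-E₁ / T t) := Real.exp_pos _
    nlinarith [mul_nonneg (mul_pos hk₂ hB).le (sub_nonneg.2 hex2),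
      mul_nonneg (mul_pos hk₁ hex1).le hA.le]
  -- T ts > Tmin
  have hTgt : Tmin < T ts := by
    have := gronwall_pos_aux (f := fun t => T t - Tmin)
      (f' := fun t => J₁ * k₁ * Real.exp (-E₁ / T t) * cA t
          + J₂ * k₂ * Real.exp (-E₂ / T t) * cB t + h * (Ts - T t)) (c := h) htspos
      (fun t ht => (hT' t ht).sub_const Tmin)
      (fun t ht => by
        show -(h * (T t - Tmin)) ≤ J₁ * k₁ * Real.exp (-E₁ / T t) * cA t
          + J₂ * k₂ * Real.exp (-E₂ / T t) * cB t + h * (Ts - T t)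
        obtain ⟨hA, _, hB, _, hTm, _⟩ := hIoo t ht
        have he1 : 0 < Real.exp (-E₁ / T t) := Real.exp_pos _
        have he2 : 0 < Real.exp (-E₂ / T t) := Real.exp_pos _
        nlinarith [mul_nonneg (mul_nonneg (mul_pos hJ₁ hk₁).le he1.le) hA.le,
          mul_nonneg (mul_nonneg (mul_pos hJ₂ hk₂).le he2.le) hB.le,
          mul_nonneg hh.le (sub_nonneg.2 hTminTs)]) (sub_pos.2 hT0.1)
    have h9 : (0:ℝ) < T ts - Tmin := this
    linarith
  -- cA ts < chat₁
  have hAlt : cA ts < chat₁ := by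
    rcases lt_or_eq_of_le hAcl.2 with h' | h'
    · exact h'
    · exfalso
      have hd : -(k₁ * Real.exp (-E₁ / T ts)) * cA ts < 0 := by
        nlinarith [mul_pos (mul_pos hk₁ (Real.exp_pos (-E₁ / T ts))) hApos]
      obtain ⟨t, ht, hgt⟩ := exists_gt_of_deriv_neg_aux htspos hd (hcA' ts htsmem)
      have := (hbefore t ht).1.2
      linarith [h' ▸ hgt]
  -- T ts < Tmax
  have hTlt : T ts < Tmax := by
    rcases lt_or_eq_of_le hTcl.2 with h' | h'
    · exact h'
    · exfalso
      have hTmaxpos : 0 < Tmax := lt_of_lt_of_le hTmin (hTcl.1.trans hTcl.2)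
      have hd : J₁ * k₁ * Real.exp (-E₁ / T ts) * cA ts
          + J₂ * k₂ * Real.exp (-E₂ / T ts) * cB ts + h * (Ts - T ts) < 0 := by
        rw [h']
        have he1 : Real.exp (-E₁ / Tmax) < 1 :=
          Real.exp_lt_one_iff.2 (div_neg_of_neg_of_pos (by linarith) hTmaxpos)
        have he2 : Real.exp (-E₂ / Tmax) < 1 :=
          Real.exp_lt_one_iff.2 (div_neg_of_neg_of_pos (by linarith) hTmaxpos)
        have he1' : 0 < Real.exp (-E₁ / Tmax) := Real.exp_pos _
        have he2' : 0 < Real.exp (-E₂ / Tmax) := Real.exp_pos _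
        have hsum : J₁ * k₁ * chat₁ + J₂ * k₂ * chat₂ + h * Ts ≤ h * Tmax := by
          have := (div_le_iff₀ hh).1 (by linarith : (J₁ * k₁ * chat₁ + J₂ * k₂ * chat₂) / h ≤ Tmax - Ts)
          linarith
        have b1 : Real.exp (-E₁ / Tmax) * cA ts ≤ Real.exp (-E₁ / Tmax) * chat₁ :=
          mul_le_mul_of_nonneg_left hAcl.2 he1'.le
        have b1' : Real.exp (-E₁ / Tmax) * chat₁ < chat₁ := by nlinarith
        have b2 : Real.exp (-E₂ / Tmax) * cB ts ≤ Real.exp (-E₂ / Tmax) * chat₂ :=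
          mul_le_mul_of_nonneg_left hBcl.2 he2'.le
        have b2' : Real.exp (-E₂ / Tmax) * chat₂ < chat₂ := by nlinarith
        have c1 : J₁ * k₁ * (Real.exp (-E₁ / Tmax) * cA ts) < J₁ * k₁ * chat₁ :=
          mul_lt_mul_of_pos_left (lt_of_le_of_lt b1 b1') (mul_pos hJ₁ hk₁)
        have c2 : J₂ * k₂ * (Real.exp (-E₂ / Tmax) * cB ts) < J₂ * k₂ * chat₂ :=
          mul_lt_mul_of_pos_left (lt_of_le_of_lt b2 b2') (mul_pos hJ₂ hk₂)
        nlinarith [c1, c2, hsum]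
      obtain ⟨t, ht, hgt⟩ := exists_gt_of_deriv_neg_aux htspos hd (hT' ts htsmem)
      have := (hbefore t ht).2.2.2
      linarith [h' ▸ hgt]
  -- cB ts < chat₂
  have hBlt : cB ts < chat₂ := by
    rcases lt_or_eq_of_le hBcl.2 with h' | h'
    · exact h'
    · exfalso
      have hTsne : T ts ≠ 0 := hTtspos.ne'
      have hexpkey : Real.exp (-E₂ / T ts) * Real.exp ((E₂ - E₁) / T ts)
          = Real.exp (-E₁ / T ts) := by
        rw [← Real.exp_add]
        congr 1
        field_simp
        ring
      have hkey : k₁ * Real.exp (-E₁ / T ts) * chat₁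
          = k₂ * Real.exp (-E₂ / T ts) * ((k₁ / k₂) * Real.exp ((E₂ - E₁) / T ts) * chat₁) := by
        rw [show k₂ * Real.exp (-E₂ / T ts) * (k₁ / k₂ * Real.exp ((E₂ - E₁) / T ts) * chat₁)
            = k₁ * (Real.exp (-E₂ / T ts) * Real.exp ((E₂ - E₁) / T ts)) * chat₁ by
          field_simp]
        rw [hexpkey]
      have hrho : (k₁ / k₂) * Real.exp ((E₂ - E₁) / T ts) * chat₁ < chat₂ := by
        rcases le_or_gt E₂ E₁ with hE | hE
        · have hex : Real.exp ((E₂ - E₁) / T ts) ≤ 1 :=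
            Real.exp_le_one_iff.2 (div_nonpos_of_nonpos_of_nonneg (by linarith) hTtspos.le)
          have hk : 0 < k₁ / k₂ := div_pos hk₁ hk₂
          nlinarith [hcase1 hE, mul_nonneg (mul_pos hk hchat₁).le (sub_nonneg.2 hex)]
        · have hex : Real.exp ((E₂ - E₁) / T ts) ≤ Real.exp ((E₂ - E₁) / Tmin) := by
            apply Real.exp_le_exp.2
            apply div_le_div_of_nonneg_left (by linarith) hTmin hTcl.1
          have hk : 0 < k₁ / k₂ := div_pos hk₁ hk₂
          nlinarith [hcase2 hE, mul_nonneg (mul_pos hk hchat₁).le (sub_nonneg.2 hex)]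
      have hd : k₁ * Real.exp (-E₁ / T ts) * cA ts - k₂ * Real.exp (-E₂ / T ts) * cB ts < 0 := by
        rw [h']
        have he1 : 0 < Real.exp (-E₁ / T ts) := Real.exp_pos _
        have he2 : 0 < Real.exp (-E₂ / T ts) := Real.exp_pos _
        have h1 : k₁ * Real.exp (-E₁ / T ts) * cA ts ≤ k₁ * Real.exp (-E₁ / T ts) * chat₁ :=
          mul_le_mul_of_nonneg_left hAcl.2 (mul_pos hk₁ he1).le
        rw [hkey] at h1
        have h2 := mul_lt_mul_of_pos_left hrho (mul_pos hk₂ he2)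
        linarith
      obtain ⟨t, ht, hgt⟩ := exists_gt_of_deriv_neg_aux htspos hd (hcB' ts htsmem)
      have := (hbefore t ht).2.1.2
      linarith [h' ▸ hgt]
  exact htsP ⟨⟨hApos, hAlt⟩, ⟨hBpos, hBlt⟩, ⟨hTgt, hTlt⟩⟩
end

section
/- Assume E₁ = E₂ = E and (J₁ + J₂) * k₂ = J₁ * k₁. If cA, cB, T : ℝ → ℝ are differentiable on [0, τ] with T t > 0 and satisfy the batch reactor equations on [0, τ], then the function w t := (J₁ + J₂) * cA t + J₂ * cB t satisfies w' t = -k₂ * Real.exp (-E / T t) * w t and T' t = k₂ * Real.exp (-E / T t) * w t + h * (Ts - T t) for all t ∈ [0, τ]. (Reduced observable subsystem (3.10) of Application 1.) -/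
/-- Reduced observable subsystem (3.10) of Application 1: if `E₁ = E₂ = E` and
`(J₁ + J₂) * k₂ = J₁ * k₁`, then `w = (J₁ + J₂) * cA + J₂ * cB` satisfies
`w' = -k₂ * exp (-E / T) * w` and `T' = k₂ * exp (-E / T) * w + h * (Ts - T)`. -/
theorem stmt_14 (J₁ J₂ k₁ k₂ h E₁ E₂ E Ts τ : ℝ)
    (hJ₁ : 0 < J₁) (hJ₂ : 0 < J₂) (hk₁ : 0 < k₁) (hk₂ : 0 < k₂) (hh : 0 < h)
    (hE₁ : 0 < E₁) (hE₂ : 0 < E₂) (hTs : 0 < Ts) (hτ : 0 < τ)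
    (hE1 : E₁ = E) (hE2 : E₂ = E) (hdeg : (J₁ + J₂) * k₂ = J₁ * k₁)
    (cA cB T : ℝ → ℝ) (hTpos : ∀ t ∈ Set.Icc (0:ℝ) τ, 0 < T t)
    (hcA : ∀ t ∈ Set.Icc (0:ℝ) τ,
      HasDerivWithinAt cA (-(k₁ * Real.exp (-E₁ / T t)) * cA t) (Set.Icc 0 τ) t)
    (hcB : ∀ t ∈ Set.Icc (0:ℝ) τ,
      HasDerivWithinAt cB
        (k₁ * Real.exp (-E₁ / T t) * cA t - k₂ * Real.exp (-E₂ / T t) * cB t)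
        (Set.Icc 0 τ) t)
    (T' : ℝ → ℝ)
    (hT : ∀ t ∈ Set.Icc (0:ℝ) τ, HasDerivWithinAt T (T' t) (Set.Icc 0 τ) t)
    (hT' : ∀ t ∈ Set.Icc (0:ℝ) τ,
      T' t = J₁ * k₁ * Real.exp (-E₁ / T t) * cA t
        + J₂ * k₂ * Real.exp (-E₂ / T t) * cB t + h * (Ts - T t))
    (w : ℝ → ℝ) (hw : ∀ t, w t = (J₁ + J₂) * cA t + J₂ * cB t) :
    ∀ t ∈ Set.Icc (0:ℝ) τ,
      HasDerivWithinAt w (-(k₂ * Real.exp (-E / T t)) * w t) (Set.Icc 0 τ) t ∧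
      T' t = k₂ * Real.exp (-E / T t) * w t + h * (Ts - T t) := by
  subst hE1 hE2
  intro t ht
  constructor
  · have hwfun : w = fun s => (J₁ + J₂) * cA s + J₂ * cB s := funext hw
    rw [hwfun]
    have := ((hcA t ht).const_mul (J₁ + J₂)).add ((hcB t ht).const_mul J₂)
    refine this.congr_deriv ?_
    symm
    beta_reduce
    linear_combination (-(Real.exp (-E₂ / T t)) * cA t) * hdeg
  · rw [hT' t ht, hw t]
    linear_combination (-(Real.exp (-E₂ / T t)) * cA t) * hdeg
end

section
/- Let T : ℝ → ℝ be differentiable on [0, r] with T t > 0 for all t ∈ [0, r], and set M := J₁ * Real.exp ((E₂ - E₁) / T 0). If for all t ∈ [0, r] the identity J₁ * Real.exp (-E₁ / T t) * Real.exp (-∫ s in (0:ℝ)..t, k₁ * Real.exp (-E₁ / T s)) + J₂ * k₂ * Real.exp (-E₂ / T t) * (∫ τ in (0:ℝ)..t, Real.exp (-E₁ / T τ - (∫ s in τ..t, k₂ * Real.exp (-E₂ / T s)) - ∫ s in (0:ℝ)..τ, k₁ * Real.exp (-E₁ / T s))) = M * Real.exp (-E₂ / T t) * Real.exp (-∫ s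 in (0:ℝ)..t, k₂ * Real.exp (-E₂ / T s)) holds, then for all t ∈ [0, r]: (J₁ + J₂) * k₂ * Real.exp (-E₂ / T t) - J₁ * k₁ * Real.exp (-E₁ / T t) = (E₂ - E₁) * J₁ * T' t / (T t)^2. (Implication (3.5) ⇒ (3.7) in the strong observability analysis of Application 1.) -/
open MeasureTheory intervalIntegral

/-- Implication (3.5) ⇒ (3.7) in the strong observability analysis of
Application 1: if the indistinguishability identity (3.5) holds on `[0, r]`
with `M = J₁ * exp ((E₂ - E₁) / T 0)`, then identity (3.7) holds on `[0, r]`. -/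
theorem stmt_15 (J₁ J₂ k₁ k₂ E₁ E₂ r : ℝ)
    (hJ₁ : 0 < J₁) (hJ₂ : 0 < J₂) (hk₁ : 0 < k₁) (hk₂ : 0 < k₂)
    (hE₁ : 0 < E₁) (hE₂ : 0 < E₂) (hr : 0 < r)
    (T T' : ℝ → ℝ)
    (hT : ∀ t ∈ Set.Icc (0:ℝ) r, HasDerivWithinAt T (T' t) (Set.Icc 0 r) t)
    (hTpos : ∀ t ∈ Set.Icc (0:ℝ) r, 0 < T t)
    (M : ℝ) (hM : M = J₁ * Real.exp ((E₂ - E₁) / T 0))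
    (hid : ∀ t ∈ Set.Icc (0:ℝ) r,
      J₁ * Real.exp (-E₁ / T t)
          * Real.exp (-∫ s in (0:ℝ)..t, k₁ * Real.exp (-E₁ / T s))
        + J₂ * k₂ * Real.exp (-E₂ / T t)
          * (∫ u in (0:ℝ)..t, Real.exp (-E₁ / T u
              - (∫ s in u..t, k₂ * Real.exp (-E₂ / T s))
              - ∫ s in (0:ℝ)..u, k₁ * Real.exp (-E₁ / T s)))
        = M * Real.exp (-E₂ / T t)
          * Real.exp (-∫ s in (0:ℝ)..t, k₂ * Real.exp (-E₂ / T s))) :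
    ∀ t ∈ Set.Icc (0:ℝ) r,
      (J₁ + J₂) * k₂ * Real.exp (-E₂ / T t) - J₁ * k₁ * Real.exp (-E₁ / T t)
        = (E₂ - E₁) * J₁ * T' t / (T t) ^ 2 := by
  -- Projection onto [0, r] and the "clamped" temperature
  set π : ℝ → ℝ := fun s => max 0 (min s r) with hπ
  have hπmem : ∀ s, π s ∈ Set.Icc (0:ℝ) r := fun s =>
    ⟨le_max_left _ _, max_le hr.le (min_le_right _ _)⟩
  have hπcont : Continuous π := continuous_const.max (continuous_id.min continuous_const)
  have hπid : ∀ t ∈ Set.Icc (0:ℝ) r, π t = t := by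
    intro t ht
    simp only [hπ]
    rw [min_eq_left ht.2, max_eq_right ht.1]
  have hTcont : ContinuousOn T (Set.Icc 0 r) := fun t ht => (hT t ht).continuousWithinAt
  set Tc : ℝ → ℝ := fun s => T (π s) with hTc
  have hTccont : Continuous Tc := hTcont.comp_continuous hπcont hπmem
  have hTcpos : ∀ s, 0 < Tc s := fun s => hTpos _ (hπmem s)
  have hTcne : ∀ s, Tc s ≠ 0 := fun s => (hTcpos s).ne'
  have hTceq : ∀ t ∈ Set.Icc (0:ℝ) r, Tc t = T t := by
    intro t ht; simp only [hTc]; rw [hπid t ht]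
  -- the two rate functions, globally continuous
  set a : ℝ → ℝ := fun s => Real.exp (-E₁ / Tc s) with ha
  set b : ℝ → ℝ := fun s => Real.exp (-E₂ / Tc s) with hb
  have hacont : Continuous a :=
    Real.continuous_exp.comp (continuous_const.div hTccont fun s => hTcne s)
  have hbcont : Continuous b :=
    Real.continuous_exp.comp (continuous_const.div hTccont fun s => hTcne s)
  -- the primitive functions
  set A : ℝ → ℝ := fun t => ∫ s in (0:ℝ)..t, k₁ * a s with hA
  set B : ℝ → ℝ := fun t => ∫ s in (0:ℝ)..t, k₂ * b s with hB
  have hA' : ∀ t, HasDerivAt A (k₁ * a t) t := fun t =>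
    ((continuous_const.mul hacont).integral_hasStrictDerivAt 0 t).hasDerivAt
  have hB' : ∀ t, HasDerivAt B (k₂ * b t) t := fun t =>
    ((continuous_const.mul hbcont).integral_hasStrictDerivAt 0 t).hasDerivAt
  have hAcont : Continuous A :=
    continuous_iff_continuousAt.2 fun t => (hA' t).continuousAt
  have hBcont : Continuous B :=
    continuous_iff_continuousAt.2 fun t => (hB' t).continuousAt
  set H : ℝ → ℝ := fun t => ∫ u in (0:ℝ)..t, a u * Real.exp (B u - A u) with hH
  have hHicont : Continuous fun u => a u * Real.exp (B u - A u) :=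
    hacont.mul (Real.continuous_exp.comp (hBcont.sub hAcont))
  have hH' : ∀ t, HasDerivAt H (a t * Real.exp (B t - A t)) t := fun t =>
    (hHicont.integral_hasStrictDerivAt 0 t).hasDerivAt
  -- rewrite the hypothesis using the clamped functions
  set Φ : ℝ → ℝ := fun t => J₁ * Real.exp ((E₂ - E₁) / Tc t + B t - A t) + J₂ * k₂ * H t
    with hΦdef
  have key : ∀ t ∈ Set.Icc (0:ℝ) r, Φ t = M := by
    intro t ht
    have h1 : (∫ s in (0:ℝ)..t, k₁ * Real.exp (-E₁ / T s)) = A t := by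
      apply intervalIntegral.integral_congr
      intro s hs
      rw [Set.uIcc_of_le ht.1] at hs
      have hsm : s ∈ Set.Icc (0:ℝ) r := ⟨hs.1, hs.2.trans ht.2⟩
      simp only [ha, hTceq s hsm]
    have h2 : (∫ s in (0:ℝ)..t, k₂ * Real.exp (-E₂ / T s)) = B t := by
      apply intervalIntegral.integral_congr
      intro s hs
      rw [Set.uIcc_of_le ht.1] at hs
      have hsm : s ∈ Set.Icc (0:ℝ) r := ⟨hs.1, hs.2.trans ht.2⟩
      simp only [hb, hTceq s hsm]
    have h3 : (∫ u in (0:ℝ)..t, Real.exp (-E₁ / T u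
              - (∫ s in u..t, k₂ * Real.exp (-E₂ / T s))
              - ∫ s in (0:ℝ)..u, k₁ * Real.exp (-E₁ / T s)))
        = Real.exp (-B t) * H t := by
      have hcong : ∀ u ∈ Set.uIcc (0:ℝ) t, Real.exp (-E₁ / T u
              - (∫ s in u..t, k₂ * Real.exp (-E₂ / T s))
              - ∫ s in (0:ℝ)..u, k₁ * Real.exp (-E₁ / T s))
          = Real.exp (-B t) * (a u * Real.exp (B u - A u)) := by
        intro u hu
        rw [Set.uIcc_of_le ht.1] at hu
        have hum : u ∈ Set.Icc (0:ℝ) r := ⟨hu.1, hu.2.trans ht.2⟩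
        have hi1 : (∫ s in u..t, k₂ * Real.exp (-E₂ / T s)) = B t - B u := by
          have hc : (∫ s in u..t, k₂ * Real.exp (-E₂ / T s)) = ∫ s in u..t, k₂ * b s := by
            apply intervalIntegral.integral_congr
            intro s hs
            rw [Set.uIcc_of_le hu.2] at hs
            have hsm : s ∈ Set.Icc (0:ℝ) r := ⟨hu.1.trans hs.1, hs.2.trans ht.2⟩
            simp only [hb, hTceq s hsm]
          rw [hc, hB]
          rw [← intervalIntegral.integral_interval_sub_left (f := fun s => k₂ * b s)
            ((continuous_const.mul hbcont).intervalIntegrable 0 t)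
            ((continuous_const.mul hbcont).intervalIntegrable 0 u)]
        have hi2 : (∫ s in (0:ℝ)..u, k₁ * Real.exp (-E₁ / T s)) = A u := by
          apply intervalIntegral.integral_congr
          intro s hs
          rw [Set.uIcc_of_le hu.1] at hs
          have hsm : s ∈ Set.Icc (0:ℝ) r := ⟨hs.1, (hs.2.trans hu.2).trans ht.2⟩
          simp only [ha, hTceq s hsm]
        rw [hi1, hi2, ha]
        rw [← Real.exp_add, ← Real.exp_add, hTceq u hum]
        ring_nf
      rw [intervalIntegral.integral_congr hcong, intervalIntegral.integral_const_mul]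
    have hid' := hid t ht
    rw [h1, h2, h3] at hid'
    -- now hid' : J₁ * exp(-E₁/T t) * exp(-A t) + J₂*k₂*exp(-E₂/T t)*(exp(-B t)*H t)
    --          = M * exp(-E₂/T t) * exp(-B t)
    have hbt : Real.exp (-E₂ / T t) ≠ 0 := Real.exp_ne_zero _
    have hBt : Real.exp (-B t) ≠ 0 := Real.exp_ne_zero _
    have hmul : Φ t * (Real.exp (-E₂ / T t) * Real.exp (-B t))
        = M * (Real.exp (-E₂ / T t) * Real.exp (-B t)) := by
      simp only [hΦdef]
      rw [add_mul]
      have hG : Real.exp ((E₂ - E₁) / Tc t + B t - A t)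
          * (Real.exp (-E₂ / T t) * Real.exp (-B t))
          = Real.exp (-E₁ / T t) * Real.exp (-A t) := by
        rw [← Real.exp_add, ← Real.exp_add, ← Real.exp_add, hTceq t ht]
        congr 1
        have hTt : T t ≠ 0 := (hTpos t ht).ne'
        field_simp
        ring
      calc J₁ * Real.exp ((E₂ - E₁) / Tc t + B t - A t)
            * (Real.exp (-E₂ / T t) * Real.exp (-B t))
            + J₂ * k₂ * H t * (Real.exp (-E₂ / T t) * Real.exp (-B t))
          = J₁ * (Real.exp ((E₂ - E₁) / Tc t + B t - A t)
              * (Real.exp (-E₂ / T t) * Real.exp (-B t)))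
            + J₂ * k₂ * Real.exp (-E₂ / T t) * (Real.exp (-B t) * H t) := by ring
        _ = J₁ * (Real.exp (-E₁ / T t) * Real.exp (-A t))
            + J₂ * k₂ * Real.exp (-E₂ / T t) * (Real.exp (-B t) * H t) := by rw [hG]
        _ = M * (Real.exp (-E₂ / T t) * Real.exp (-B t)) := by
            linear_combination hid'
    exact mul_right_cancel₀ (mul_ne_zero hbt hBt) hmul
  -- differentiate
  intro t ht
  have hTc' : HasDerivWithinAt Tc (T' t) (Set.Icc 0 r) t := by
    apply (hT t ht).congr
    · intro y hy; exact hTceq y hy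
    · exact hTceq t ht
  have hq : HasDerivWithinAt (fun t => (E₂ - E₁) / Tc t + B t - A t)
      ((0 * Tc t - (E₂ - E₁) * T' t) / Tc t ^ 2 + k₂ * b t - k₁ * a t) (Set.Icc 0 r) t := by
    exact (((hasDerivWithinAt_const t _ (E₂ - E₁)).div hTc' (hTcne t)).add
      (hB' t).hasDerivWithinAt).sub (hA' t).hasDerivWithinAt
  have hΦ' : HasDerivWithinAt Φ
      (J₁ * (Real.exp ((E₂ - E₁) / Tc t + B t - A t)
          * ((0 * Tc t - (E₂ - E₁) * T' t) / Tc t ^ 2 + k₂ * b t - k₁ * a t))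
        + J₂ * k₂ * (a t * Real.exp (B t - A t))) (Set.Icc 0 r) t := by
    exact (hq.exp.const_mul J₁).add ((hH' t).hasDerivWithinAt.const_mul (J₂ * k₂))
  have hΦ0 : HasDerivWithinAt Φ 0 (Set.Icc 0 r) t := by
    apply (hasDerivWithinAt_const t (Set.Icc 0 r) M).congr
    · intro y hy; exact key y hy
    · exact key t ht
  have hD0 : J₁ * (Real.exp ((E₂ - E₁) / Tc t + B t - A t)
          * ((0 * Tc t - (E₂ - E₁) * T' t) / Tc t ^ 2 + k₂ * b t - k₁ * a t))
        + J₂ * k₂ * (a t * Real.exp (B t - A t)) = 0 := by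
    have h1 := hΦ'.derivWithin ((uniqueDiffOn_Icc hr) t ht)
    have h2 := hΦ0.derivWithin ((uniqueDiffOn_Icc hr) t ht)
    rw [h1] at h2; exact h2
  -- final algebra
  have hGb : a t * Real.exp (B t - A t)
      = Real.exp ((E₂ - E₁) / Tc t + B t - A t) * b t := by
    show Real.exp (-E₁ / Tc t) * Real.exp (B t - A t)
      = Real.exp ((E₂ - E₁) / Tc t + B t - A t) * Real.exp (-E₂ / Tc t)
    rw [← Real.exp_add, ← Real.exp_add]
    congr 1
    have h0 := hTcne t
    field_simp
    ring
  rw [hGb] at hD0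
  have hGne : Real.exp ((E₂ - E₁) / Tc t + B t - A t) ≠ 0 := Real.exp_ne_zero _
  have hfac : Real.exp ((E₂ - E₁) / Tc t + B t - A t)
      * (J₁ * ((0 * Tc t - (E₂ - E₁) * T' t) / Tc t ^ 2 + k₂ * b t - k₁ * a t)
          + J₂ * k₂ * b t) = 0 := by linear_combination hD0
  have hz : J₁ * ((0 * Tc t - (E₂ - E₁) * T' t) / Tc t ^ 2 + k₂ * b t - k₁ * a t)
      + J₂ * k₂ * b t = 0 := by
    rcases mul_eq_zero.1 hfac with h | h
    · exact absurd h hGne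
    · exact h
  have hTt : T t ≠ 0 := (hTpos t ht).ne'
  have hat : a t = Real.exp (-E₁ / T t) := by simp only [ha, hTceq t ht]
  have hbt : b t = Real.exp (-E₂ / T t) := by simp only [hb, hTceq t ht]
  rw [hat, hbt, hTceq t ht] at hz
  have h := hz
  field_simp at h ⊢
  linarith [h]
end

section
/- Assume E₁ = E₂ = E > 0. Let T : ℝ → ℝ be continuous on [0, r] with T t > 0 for all t ∈ [0, r]. If for all t ∈ [0, r] the identity J₁ * Real.exp (-E / T t) * Real.exp (-∫ s in (0:ℝ)..t, k₁ * Real.exp (-E / T s)) + J₂ * k₂ * Real.exp (-E / T t) * (∫ τ in (0:ℝ)..t, Real.exp (-E / T τ - (∫ s in τ..t, k₂ * Real.exp (-E / T s)) - ∫ s in (0:ℝ)..τ, k₁ * Real.exp (-E / T s))) = J₁ * Real.exp (-E / T t) * Real.exp (-∫ s in (0:ℝ)..t, k₂ * Real.exp (-E / T s)) holds, then (J₁ + J₂) * k₂ = J₁ * k₁. (Case 1, E₁ = E₂, of the strong observability proof in Application 1: the indistinguishability identity (3.5) forces the parameter degeneracy (J₁ + J₂) k₂ = J₁ k₁.) 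-/
open MeasureTheory intervalIntegral

/-- Case 1 (`E₁ = E₂ = E`) of the strong observability proof in Application 1:
the indistinguishability identity (3.5) on `[0, r]` forces the parameter
degeneracy `(J₁ + J₂) * k₂ = J₁ * k₁`. -/
theorem stmt_16 (J₁ J₂ k₁ k₂ E r : ℝ)
    (hJ₁ : 0 < J₁) (hJ₂ : 0 < J₂) (hk₁ : 0 < k₁) (hk₂ : 0 < k₂)
    (hE : 0 < E) (hr : 0 < r)
    (T : ℝ → ℝ) (hT : ContinuousOn T (Set.Icc 0 r))
    (hTpos : ∀ t ∈ Set.Icc (0:ℝ) r, 0 < T t)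
    (hid : ∀ t ∈ Set.Icc (0:ℝ) r,
      J₁ * Real.exp (-E / T t)
          * Real.exp (-∫ s in (0:ℝ)..t, k₁ * Real.exp (-E / T s))
        + J₂ * k₂ * Real.exp (-E / T t)
          * (∫ u in (0:ℝ)..t, Real.exp (-E / T u
              - (∫ s in u..t, k₂ * Real.exp (-E / T s))
              - ∫ s in (0:ℝ)..u, k₁ * Real.exp (-E / T s)))
        = J₁ * Real.exp (-E / T t)
          * Real.exp (-∫ s in (0:ℝ)..t, k₂ * Real.exp (-E / T s))) :
    (J₁ + J₂) * k₂ = J₁ * k₁ := by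
  -- projection onto [0,r]
  set p : ℝ → ℝ := fun s => max 0 (min s r) with hp
  have hpmem : ∀ s, p s ∈ Set.Icc (0:ℝ) r := by
    intro s
    exact ⟨le_max_left _ _, max_le hr.le (min_le_right _ _)⟩
  have hpeq : ∀ s ∈ Set.Icc (0:ℝ) r, p s = s := by
    intro s hs
    simp [hp, min_eq_left hs.2, max_eq_right hs.1]
  set g : ℝ → ℝ := fun s => Real.exp (-E / T (p s)) with hg
  have hgpos : ∀ s, 0 < g s := fun s => Real.exp_pos _
  have hpc : Continuous p := (continuous_const.max ((continuous_id.min continuous_const)))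
  have hTc : Continuous fun s => T (p s) := hT.comp_continuous hpc hpmem
  have hgc : Continuous g :=
    Real.continuous_exp.comp (continuous_const.div hTc fun s => (hTpos _ (hpmem s)).ne')
  have hgeq : ∀ s ∈ Set.Icc (0:ℝ) r, Real.exp (-E / T s) = g s := by
    intro s hs; rw [hg]; simp only [hpeq s hs]
  set F : ℝ → ℝ := fun t => ∫ s in (0:ℝ)..t, k₁ * g s with hF
  set G : ℝ → ℝ := fun t => ∫ s in (0:ℝ)..t, k₂ * g s with hG
  set φ : ℝ → ℝ := fun t => Real.exp (G t - F t) with hφ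
  have hderivF : ∀ x : ℝ, HasDerivAt F (k₁ * g x) x := by
    intro x
    exact intervalIntegral.integral_hasDerivAt_right
      ((continuous_const.mul hgc).intervalIntegrable _ _)
      ((continuous_const.mul hgc).stronglyMeasurableAtFilter _ _)
      (continuous_const.mul hgc).continuousAt
  have hderivG : ∀ x : ℝ, HasDerivAt G (k₂ * g x) x := by
    intro x
    exact intervalIntegral.integral_hasDerivAt_right
      ((continuous_const.mul hgc).intervalIntegrable _ _)
      ((continuous_const.mul hgc).stronglyMeasurableAtFilter _ _)
      (continuous_const.mul hgc).continuousAt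
  have hderivφ : ∀ x : ℝ, HasDerivAt φ ((k₂ - k₁) * (g x * φ x)) x := by
    intro x
    have h := ((hderivG x).sub (hderivF x)).exp
    convert h using 1
    · rfl
    show (k₂ - k₁) * (g x * Real.exp (G x - F x)) = Real.exp (G x - F x) * (k₂ * g x - k₁ * g x)
    ring
  have hφc : Continuous φ := by
    have : Differentiable ℝ φ := fun x => (hderivφ x).differentiableAt
    exact this.continuous
  set ψ : ℝ := ∫ u in (0:ℝ)..r, g u * φ u with hψ
  have hψpos : 0 < ψ := by
    apply intervalIntegral.intervalIntegral_pos_of_pos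
      ((hgc.mul hφc).intervalIntegrable _ _) _ hr
    intro x
    exact mul_pos (hgpos x) (Real.exp_pos _)
  -- FTC: φ r - 1 = (k₂ - k₁) * ψ
  have hFTC : φ r - 1 = (k₂ - k₁) * ψ := by
    have h1 : (∫ u in (0:ℝ)..r, (k₂ - k₁) * (g u * φ u)) = φ r - φ 0 :=
      intervalIntegral.integral_eq_sub_of_hasDerivAt
        (fun x _ => hderivφ x)
        ((continuous_const.mul (hgc.mul hφc)).intervalIntegrable _ _)
    have h0 : φ 0 = 1 := by
      simp [hφ, hF, hG]
    rw [intervalIntegral.integral_const_mul] at h1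
    rw [← hψ] at h1
    rw [h0] at h1
    linarith
  -- instantiate hid at r and rewrite
  have hr' : r ∈ Set.Icc (0:ℝ) r := ⟨hr.le, le_refl r⟩
  have key := hid r hr'
  have huIcc : Set.uIcc (0:ℝ) r = Set.Icc 0 r := Set.uIcc_of_le hr.le
  have hint1 : (∫ s in (0:ℝ)..r, k₁ * Real.exp (-E / T s)) = F r := by
    apply intervalIntegral.integral_congr
    intro s hs
    rw [huIcc] at hs
    simp only [hgeq s hs]
  have hint2 : (∫ s in (0:ℝ)..r, k₂ * Real.exp (-E / T s)) = G r := by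
    apply intervalIntegral.integral_congr
    intro s hs
    rw [huIcc] at hs
    simp only [hgeq s hs]
  have hint3 : (∫ u in (0:ℝ)..r, Real.exp (-E / T u
      - (∫ s in u..r, k₂ * Real.exp (-E / T s))
      - ∫ s in (0:ℝ)..u, k₁ * Real.exp (-E / T s)))
      = Real.exp (-G r) * ψ := by
    have hcong : ∀ u ∈ Set.Icc (0:ℝ) r,
        Real.exp (-E / T u
          - (∫ s in u..r, k₂ * Real.exp (-E / T s))
          - ∫ s in (0:ℝ)..u, k₁ * Real.exp (-E / T s))
        = Real.exp (-G r) * (g u * φ u) := by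
      intro u hu
      have h2 : (∫ s in u..r, k₂ * Real.exp (-E / T s)) = G r - G u := by
        have hco : (∫ s in u..r, k₂ * Real.exp (-E / T s)) = ∫ s in u..r, k₂ * g s := by
          apply intervalIntegral.integral_congr
          intro s hs
          rw [Set.uIcc_of_le hu.2] at hs
          have : s ∈ Set.Icc (0:ℝ) r := ⟨le_trans hu.1 hs.1, hs.2⟩
          simp only [hgeq s this]
        have hadd : G u + (∫ s in u..r, k₂ * g s) = G r :=
          intervalIntegral.integral_add_adjacent_intervals
            ((continuous_const.mul hgc).intervalIntegrable _ _)
            ((continuous_const.mul hgc).intervalIntegrable _ _)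
        rw [hco]; linarith
      have h3 : (∫ s in (0:ℝ)..u, k₁ * Real.exp (-E / T s)) = F u := by
        apply intervalIntegral.integral_congr
        intro s hs
        rw [Set.uIcc_of_le hu.1] at hs
        have : s ∈ Set.Icc (0:ℝ) r := ⟨hs.1, le_trans hs.2 hu.2⟩
        simp only [hgeq s this]
      rw [h2, h3]
      have h4 : -E / T u - (G r - G u) - F u = -G r + (-E / T u + (G u - F u)) := by ring
      rw [h4, Real.exp_add, Real.exp_add, hgeq u hu]
    have := intervalIntegral.integral_congr (μ := volume) (a := (0:ℝ)) (b := r)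
      (g := fun u => Real.exp (-G r) * (g u * φ u)) (by rw [huIcc]; exact hcong)
    rw [this, intervalIntegral.integral_const_mul, ← hψ]
  rw [hint1, hint2, hint3, hgeq r hr'] at key
  -- key : J₁ * g r * exp (-F r) + J₂ * k₂ * g r * (exp (-G r) * ψ) = J₁ * g r * exp (-G r)
  have hexpF : Real.exp (-F r) = φ r * Real.exp (-G r) := by
    rw [hφ, ← Real.exp_add]
    congr 1
    ring
  rw [hexpF] at key
  have hgr := hgpos r
  have hegr := Real.exp_pos (-G r)
  have hmain : J₁ * φ r + J₂ * k₂ * ψ = J₁ := by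
    have h := key
    have hne : g r * Real.exp (-G r) ≠ 0 := (mul_pos hgr hegr).ne'
    field_simp at h ⊢
    nlinarith [mul_pos hgr hegr]
  have hcoef : (J₁ * (k₂ - k₁) + J₂ * k₂) * ψ = 0 := by nlinarith
  have : J₁ * (k₂ - k₁) + J₂ * k₂ = 0 := by
    rcases mul_eq_zero.mp hcoef with h | h
    · exact h
    · exact absurd h hψpos.ne'
  nlinarith
end

section
/- Let (x₁, x₂, y) and (z₁, z₂, w) be two triples of differentiable functions on [0, r] (r > 0) satisfying the harmonic oscillator system: y' t = x₁ t, x₁' t = x₂ t * y t, x₂' t = 0, and w' t = z₁ t, z₁' t = z₂ t * w t, z₂' t = 0 for all t ∈ [0, r]. If the outputs coincide, w t = y t for all t ∈ [0, r], and (y 0)^2 + (x₁ 0)^2 > 0, then x₁ t = z₁ t and x₂ t = z₂ t for all t ∈ [0, r]. (Strong observability of system (3.11) in Application 2: only initial states on the manifold y = x₁ = 0 can give identical output responses.) -/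
lemma const_aux17 {r : ℝ} (hr : 0 < r) (f : ℝ → ℝ)
    (hf : ∀ t ∈ Set.Icc (0:ℝ) r, HasDerivWithinAt f 0 (Set.Icc 0 r) t) :
    ∀ t ∈ Set.Icc (0:ℝ) r, f t = f 0 := by
  intro t ht
  apply constant_of_has_deriv_right_zero (f := f) (a := (0:ℝ)) (b := r)
  · exact fun s hs => (hf s hs).continuousWithinAt
  · intro s hs
    exact (hf s (Set.Ico_subset_Icc_self hs)).mono_of_mem_nhdsWithin (Icc_mem_nhdsGE_of_mem hs)
  · exact ht

/-- Strong observability of the harmonic oscillator system (3.11) in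
Application 2: if two solutions of `ẏ = x₁`, `ẋ₁ = x₂ y`, `ẋ₂ = 0` on `[0, r]`
produce the same output `w = y`, and `(y 0)² + (x₁ 0)² > 0`, then the
unmeasured states coincide: `x₁ = z₁` and `x₂ = z₂` on `[0, r]`. -/
theorem stmt_17 (r : ℝ) (hr : 0 < r)
    (x₁ x₂ y z₁ z₂ w : ℝ → ℝ)
    (hy : ∀ t ∈ Set.Icc (0:ℝ) r, HasDerivWithinAt y (x₁ t) (Set.Icc 0 r) t)
    (hx₁ : ∀ t ∈ Set.Icc (0:ℝ) r,
      HasDerivWithinAt x₁ (x₂ t * y t) (Set.Icc 0 r) t)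
    (hx₂ : ∀ t ∈ Set.Icc (0:ℝ) r, HasDerivWithinAt x₂ 0 (Set.Icc 0 r) t)
    (hw : ∀ t ∈ Set.Icc (0:ℝ) r, HasDerivWithinAt w (z₁ t) (Set.Icc 0 r) t)
    (hz₁ : ∀ t ∈ Set.Icc (0:ℝ) r,
      HasDerivWithinAt z₁ (z₂ t * w t) (Set.Icc 0 r) t)
    (hz₂ : ∀ t ∈ Set.Icc (0:ℝ) r, HasDerivWithinAt z₂ 0 (Set.Icc 0 r) t)
    (hout : ∀ t ∈ Set.Icc (0:ℝ) r, w t = y t)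
    (hinit : (y 0) ^ 2 + (x₁ 0) ^ 2 > 0) :
    ∀ t ∈ Set.Icc (0:ℝ) r, x₁ t = z₁ t ∧ x₂ t = z₂ t := by
  have hud := uniqueDiffOn_Icc hr
  have h0 : (0:ℝ) ∈ Set.Icc (0:ℝ) r := ⟨le_refl _, hr.le⟩
  -- x₁ = z₁ on Icc
  have h1 : ∀ t ∈ Set.Icc (0:ℝ) r, x₁ t = z₁ t := by
    intro t ht
    have hw' : HasDerivWithinAt y (z₁ t) (Set.Icc 0 r) t :=
      (hw t ht).congr (fun s hs => (hout s hs).symm) (hout t ht).symm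
    exact (hud t ht).eq_deriv _ (hy t ht) hw'
  -- x₂ and z₂ constant
  have hc2 := const_aux17 hr x₂ hx₂
  have hc2' := const_aux17 hr z₂ hz₂
  -- derivative uniqueness for x₁ = z₁
  have h2 : ∀ t ∈ Set.Icc (0:ℝ) r, x₂ t * y t = z₂ t * y t := by
    intro t ht
    have hz' : HasDerivWithinAt x₁ (z₂ t * y t) (Set.Icc 0 r) t := by
      have := (hz₁ t ht).congr (fun s hs => (h1 s hs)) (h1 t ht)
      rwa [hout t ht] at this
    exact (hud t ht).eq_deriv _ (hx₁ t ht) hz'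
  have key : x₂ 0 = z₂ 0 := by
    by_contra hne
    have hy0 : ∀ t ∈ Set.Icc (0:ℝ) r, y t = 0 := by
      intro t ht
      have h := h2 t ht
      rw [hc2 t ht, hc2' t ht] at h
      have : (x₂ 0 - z₂ 0) * y t = 0 := by ring_nf; linarith
      rcases mul_eq_zero.1 this with h' | h'
      · exact absurd (sub_eq_zero.1 h') hne
      · exact h'
    have hy00 : y 0 = 0 := hy0 0 h0
    have hx10 : x₁ 0 = 0 := by
      have hz : HasDerivWithinAt y (0:ℝ) (Set.Icc 0 r) (0:ℝ) :=
        (hasDerivWithinAt_const (0:ℝ) (Set.Icc 0 r) (0:ℝ)).congr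
          (fun s hs => (hy0 s hs)) hy00
      exact (hud 0 h0).eq_deriv _ (hy 0 h0) hz
    rw [hy00, hx10] at hinit
    norm_num at hinit
  intro t ht
  refine ⟨h1 t ht, ?_⟩
  rw [hc2 t ht, hc2' t ht, key]
end

section
/- Suppose ζ ∈ ℝⁿ, ζ ≠ 0, and (q t)ᵀ *ᵥ ζ = 0 for all t ∈ [0, r]. Then there exists λ > 0 such that, with x₁ := x₀ + λ • ζ ≠ x₀, the function x̃ t := Φ t *ᵥ x₁ + θ t satisfies: x̃ 0 = x₁, x̃' t = A t *ᵥ x̃ t + b t for all t ∈ [0, r], y' t = f t + (C t)ᵀ *ᵥ x̃ t for all t ∈ [0, r], and (x̃ t, y t) ∈ O for all t ∈ [0, r]. In other words, the initial state x₁ ≠ x₀ produces exactly the same output y on [0, r] while remaining in O, so the input does not strongly distinguish (x₀, y 0). (Construction in the proof of implication (b) ⇒ (c) of Proposition 2.3, showing failure of condition (d) yields indistinguishable states.) -/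
open MeasureTheory intervalIntegral Matrix

attribute [local instance] Matrix.normedAddCommGroup Matrix.normedSpace

/-- sup-norm bound for matrix-vector product -/
lemma aux_norm_mulVec_le {n m : ℕ} (A : Matrix (Fin n) (Fin m) ℝ) (w : Fin m → ℝ) :
    ‖A *ᵥ w‖ ≤ m * ‖A‖ * ‖w‖ := by
  have hnn : (0:ℝ) ≤ m * ‖A‖ * ‖w‖ := by positivity
  rw [pi_norm_le_iff_of_nonneg hnn]
  intro i
  calc ‖(A *ᵥ w) i‖ = ‖∑ j, A i j * w j‖ := rfl
    _ ≤ ∑ j, ‖A i j * w j‖ := norm_sum_le _ _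
    _ ≤ ∑ _j : Fin m, ‖A‖ * ‖w‖ := by
        refine Finset.sum_le_sum fun j _ => ?_
        rw [norm_mul]
        exact mul_le_mul (Matrix.norm_entry_le_entrywise_sup_norm A)
          (norm_le_pi_norm w j) (norm_nonneg _) (norm_nonneg _)
    _ = m * ‖A‖ * ‖w‖ := by simp [Finset.sum_const, mul_assoc]

/-- CLM sending a matrix to `M *ᵥ v` for fixed `v`. -/
noncomputable def mulVecCLM {n m : ℕ} (v : Fin m → ℝ) :
    Matrix (Fin n) (Fin m) ℝ →L[ℝ] (Fin n → ℝ) :=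
  LinearMap.toContinuousLinearMap
    { toFun := fun M => M *ᵥ v
      map_add' := fun M N => Matrix.add_mulVec M N v
      map_smul' := fun c M => by simp [Matrix.smul_mulVec] }

@[simp] lemma mulVecCLM_apply {n m : ℕ} (v : Fin m → ℝ) (M : Matrix (Fin n) (Fin m) ℝ) :
    mulVecCLM v M = M *ᵥ v := rfl

/-- CLM sending a matrix to `Mᵀ *ᵥ v` for fixed `v`. -/
noncomputable def transposeMulVecCLM {n m : ℕ} (v : Fin n → ℝ) :
    Matrix (Fin n) (Fin m) ℝ →L[ℝ] (Fin m → ℝ) :=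
  LinearMap.toContinuousLinearMap
    { toFun := fun M => Mᵀ *ᵥ v
      map_add' := fun M N => by simp [Matrix.transpose_add, Matrix.add_mulVec]
      map_smul' := fun c M => by simp [Matrix.transpose_smul, Matrix.smul_mulVec] }

@[simp] lemma transposeMulVecCLM_apply {n m : ℕ} (v : Fin n → ℝ) (M : Matrix (Fin n) (Fin m) ℝ) :
    transposeMulVecCLM v M = Mᵀ *ᵥ v := rfl

set_option maxHeartbeats 800000 in
/-- Construction in the proof of implication (b) ⇒ (c) of Proposition 2.3:
if `ζ ≠ 0` lies in the common kernel of the matrices `(q t)ᵀ`, then for some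
`λ > 0` the initial state `x₁ = x₀ + λ • ζ ≠ x₀` generates, via
`x̃ t = Φ t *ᵥ x₁ + θ t`, a solution of the same system producing exactly the
same output `y` on `[0, r]` while remaining in the open set `O`. -/
theorem stmt_18 (n k : ℕ) (hn : 1 ≤ n) (hk : 1 ≤ k) (r : ℝ) (hr : 0 < r)
    (O : Set ((Fin n → ℝ) × (Fin k → ℝ))) (hO : IsOpen O)
    (A : ℝ → Matrix (Fin n) (Fin n) ℝ) (b : ℝ → (Fin n → ℝ))
    (C : ℝ → Matrix (Fin n) (Fin k) ℝ) (f : ℝ → (Fin k → ℝ))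
    (hA : ContinuousOn A (Set.Icc 0 r)) (hb : ContinuousOn b (Set.Icc 0 r))
    (hC : ContinuousOn C (Set.Icc 0 r)) (hf : ContinuousOn f (Set.Icc 0 r))
    (x : ℝ → (Fin n → ℝ)) (y : ℝ → (Fin k → ℝ)) (x₀ : Fin n → ℝ)
    (hx : ∀ t ∈ Set.Icc (0:ℝ) r,
      HasDerivWithinAt x (A t *ᵥ x t + b t) (Set.Icc 0 r) t)
    (hy : ∀ t ∈ Set.Icc (0:ℝ) r,
      HasDerivWithinAt y (f t + (C t)ᵀ *ᵥ x t) (Set.Icc 0 r) t)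
    (hx0 : x 0 = x₀)
    (hinO : ∀ t ∈ Set.Icc (0:ℝ) r, (x t, y t) ∈ O)
    (Φ : ℝ → Matrix (Fin n) (Fin n) ℝ)
    (hΦ : ∀ t ∈ Set.Icc (0:ℝ) r, HasDerivWithinAt Φ (A t * Φ t) (Set.Icc 0 r) t)
    (hΦ0 : Φ 0 = 1)
    (θ : ℝ → (Fin n → ℝ))
    (hθ : ∀ t ∈ Set.Icc (0:ℝ) r,
      HasDerivWithinAt θ (A t *ᵥ θ t + b t) (Set.Icc 0 r) t)
    (hθ0 : θ 0 = 0)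
    (q : ℝ → Matrix (Fin n) (Fin k) ℝ)
    (hqdef : ∀ t, q t = ∫ s in (0:ℝ)..t, (Φ s)ᵀ * C s)
    (ζ : Fin n → ℝ) (hζ : ζ ≠ 0)
    (hker : ∀ t ∈ Set.Icc (0:ℝ) r, (q t)ᵀ *ᵥ ζ = 0) :
    ∃ lam : ℝ, 0 < lam ∧ x₀ + lam • ζ ≠ x₀ ∧
      Φ 0 *ᵥ (x₀ + lam • ζ) + θ 0 = x₀ + lam • ζ ∧
      ∀ t ∈ Set.Icc (0:ℝ) r,
        HasDerivWithinAt (fun s => Φ s *ᵥ (x₀ + lam • ζ) + θ s)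
          (A t *ᵥ (Φ t *ᵥ (x₀ + lam • ζ) + θ t) + b t) (Set.Icc 0 r) t ∧
        HasDerivWithinAt y (f t + (C t)ᵀ *ᵥ (Φ t *ᵥ (x₀ + lam • ζ) + θ t))
          (Set.Icc 0 r) t ∧
        (Φ t *ᵥ (x₀ + lam • ζ) + θ t, y t) ∈ O := by
  -- continuity facts
  have hΦc : ContinuousOn Φ (Set.Icc 0 r) := fun t ht => (hΦ t ht).continuousWithinAt
  have hθc : ContinuousOn θ (Set.Icc 0 r) := fun t ht => (hθ t ht).continuousWithinAt
  have hxc : ContinuousOn x (Set.Icc 0 r) := fun t ht => (hx t ht).continuousWithinAt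
  have hyc : ContinuousOn y (Set.Icc 0 r) := fun t ht => (hy t ht).continuousWithinAt
  -- derivative of the candidate solution, for any initial vector c
  have hgderiv : ∀ (c : Fin n → ℝ), ∀ t ∈ Set.Icc (0:ℝ) r,
      HasDerivWithinAt (fun s => Φ s *ᵥ c + θ s)
        (A t *ᵥ (Φ t *ᵥ c + θ t) + b t) (Set.Icc 0 r) t := by
    intro c t ht
    have h1 : HasDerivWithinAt (fun s => Φ s *ᵥ c) ((A t * Φ t) *ᵥ c) (Set.Icc 0 r) t := by
      have := ((mulVecCLM (n := n) c).hasFDerivAt).comp_hasDerivWithinAt t (hΦ t ht)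
      simp only [Function.comp_def, mulVecCLM_apply] at this
      exact this
    have h2 := h1.add (hθ t ht)
    refine h2.congr_deriv ?_
    rw [Matrix.mulVec_add, ← Matrix.mulVec_mulVec]
    abel
  -- Lipschitz bound for the ODE RHS
  obtain ⟨M, hM⟩ := IsCompact.exists_bound_of_continuousOn isCompact_Icc hA
  set K : NNReal := Real.toNNReal (n * max M 0) with hK
  have hKcoe : (K : ℝ) = n * max M 0 := Real.coe_toNNReal _ (by positivity)
  set cl : ℝ → ℝ := fun t => max 0 (min t r) with hcl
  have hclmem : ∀ t, cl t ∈ Set.Icc (0:ℝ) r :=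
    fun t => ⟨le_max_left _ _, max_le hr.le (min_le_right _ _)⟩
  have hcleq : ∀ t ∈ Set.Icc (0:ℝ) r, cl t = t := by
    intro t ht
    simp [hcl, min_eq_left ht.2, max_eq_right ht.1]
  have hv : ∀ t : ℝ,
      LipschitzOnWith K (fun z : Fin n → ℝ => A (cl t) *ᵥ z + b (cl t)) Set.univ := by
    intro t
    apply LipschitzWith.lipschitzOnWith
    apply LipschitzWith.of_dist_le_mul
    intro z w
    have hsub : A (cl t) *ᵥ z + b (cl t) - (A (cl t) *ᵥ w + b (cl t)) = A (cl t) *ᵥ (z - w) := by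
      rw [Matrix.mulVec_sub]; abel
    rw [dist_eq_norm, dist_eq_norm, hsub]
    calc ‖A (cl t) *ᵥ (z - w)‖ ≤ n * ‖A (cl t)‖ * ‖z - w‖ := aux_norm_mulVec_le _ _
      _ ≤ (K : ℝ) * ‖z - w‖ := by
          apply mul_le_mul_of_nonneg_right _ (norm_nonneg _)
          rw [hKcoe]
          have : ‖A (cl t)‖ ≤ max M 0 := le_max_of_le_left (hM _ (hclmem t))
          have hn0 : (0:ℝ) ≤ n := Nat.cast_nonneg n
          nlinarith [norm_nonneg (A (cl t))]
  -- uniqueness: x t = Φ t *ᵥ x₀ + θ t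
  have hxeq : ∀ t ∈ Set.Icc (0:ℝ) r, x t = Φ t *ᵥ x₀ + θ t := by
    have hgc : ContinuousOn (fun s => Φ s *ᵥ x₀ + θ s) (Set.Icc 0 r) :=
      fun t ht => (hgderiv x₀ t ht).continuousWithinAt
    have hx' : ∀ t ∈ Set.Ico (0:ℝ) r,
        HasDerivWithinAt x (A (cl t) *ᵥ x t + b (cl t)) (Set.Ici t) t := by
      intro t ht
      rw [hcleq t (Set.Ico_subset_Icc_self ht)]
      exact (hx t (Set.Ico_subset_Icc_self ht)).mono_of_mem_nhdsWithin
        (Icc_mem_nhdsGE_of_mem ht)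
    have hg' : ∀ t ∈ Set.Ico (0:ℝ) r,
        HasDerivWithinAt (fun s => Φ s *ᵥ x₀ + θ s)
          (A (cl t) *ᵥ (Φ t *ᵥ x₀ + θ t) + b (cl t)) (Set.Ici t) t := by
      intro t ht
      rw [hcleq t (Set.Ico_subset_Icc_self ht)]
      exact (hgderiv x₀ t (Set.Ico_subset_Icc_self ht)).mono_of_mem_nhdsWithin
        (Icc_mem_nhdsGE_of_mem ht)
    have hinit : x 0 = Φ 0 *ᵥ x₀ + θ 0 := by
      simp [hx0, hΦ0, hθ0, Matrix.one_mulVec]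
    exact fun t ht =>
      ODE_solution_unique_of_mem_Icc_right (v := fun t z => A (cl t) *ᵥ z + b (cl t))
        (s := fun _ => Set.univ) (fun t _ => hv t) hxc hx' (fun _ _ => trivial) hgc hg'
        (fun _ _ => trivial) hinit ht
  -- the kernel condition implies (C t)ᵀ *ᵥ (Φ t *ᵥ ζ) = 0 on [0, r]
  set h : ℝ → (Fin k → ℝ) := fun s => (C s)ᵀ *ᵥ (Φ s *ᵥ ζ) with hhdef
  have hΦCc : ContinuousOn (fun s => (Φ s)ᵀ * C s) (Set.Icc 0 r) :=
    by have := ((continuous_fst.matrix_transpose.matrix_mul continuous_snd).comp_continuousOn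
         (hΦc.prodMk hC)); exact this
  have hhc : ContinuousOn h (Set.Icc 0 r) := by
    have : ContinuousOn (fun s => transposeMulVecCLM (m := k) ζ ((Φ s)ᵀ * C s))
        (Set.Icc 0 r) := (transposeMulVecCLM ζ).continuous.comp_continuousOn hΦCc
    refine this.congr fun s _ => ?_
    simp [hhdef, Matrix.transpose_mul, Matrix.mulVec_mulVec]
  have hGzero : ∀ t ∈ Set.Icc (0:ℝ) r, (∫ s in (0:ℝ)..t, h s) = 0 := by
    intro t ht
    have hsub : Set.uIcc (0:ℝ) t ⊆ Set.Icc 0 r := by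
      rw [Set.uIcc_of_le ht.1]
      exact Set.Icc_subset_Icc le_rfl ht.2
    have hint : @IntervalIntegrable _ PseudoMetricSpace.toUniformSpace.toTopologicalSpace _
        (fun s => (Φ s)ᵀ * C s) volume 0 t :=
      (hΦCc.mono hsub).intervalIntegrable
    have hcomm := (transposeMulVecCLM (m := k) ζ).intervalIntegral_comp_comm hint
    have : (∫ s in (0:ℝ)..t, h s)
        = transposeMulVecCLM (m := k) ζ (∫ s in (0:ℝ)..t, (Φ s)ᵀ * C s) := by
      refine Eq.trans ?_ hcomm
      refine intervalIntegral.integral_congr fun s _ => ?_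
      simp [hhdef, Matrix.transpose_mul, Matrix.mulVec_mulVec]
      change _ = ((Φ s)ᵀ * C s)ᵀ *ᵥ ζ
      simp [Matrix.transpose_mul]
    rw [this, ← hqdef]
    simpa using hker t ht
  have hCΦζ : ∀ t ∈ Set.Icc (0:ℝ) r, h t = 0 := by
    intro t ht
    rcases eq_or_lt_of_le ht.1 with h0 | h0
    · -- t = 0
      subst h0
      have hmeas : StronglyMeasurableAtFilter h (nhdsWithin 0 (Set.Ioi 0)) volume :=
        ⟨Set.Icc 0 r, Icc_mem_nhdsGT_of_mem ⟨le_rfl, hr⟩,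
          hhc.aestronglyMeasurable measurableSet_Icc⟩
      have hcw : ContinuousWithinAt h (Set.Ioi 0) 0 :=
        (hhc 0 ⟨le_rfl, hr.le⟩).mono_of_mem_nhdsWithin (Icc_mem_nhdsGT_of_mem ⟨le_rfl, hr⟩)
      have hd : HasDerivWithinAt (fun u => ∫ s in (0:ℝ)..u, h s) (h 0) (Set.Ici 0) 0 :=
        intervalIntegral.integral_hasDerivWithinAt_right
          (IntervalIntegrable.refl) hmeas hcw
      have hd' : HasDerivWithinAt (fun u => ∫ s in (0:ℝ)..u, h s) (h 0)
          (Set.Icc 0 r) 0 := hd.mono Set.Icc_subset_Ici_self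
      have hz : HasDerivWithinAt (fun u => ∫ s in (0:ℝ)..u, h s) 0 (Set.Icc 0 r) 0 := by
        refine (hasDerivWithinAt_const (0:ℝ) (Set.Icc 0 r) (0 : Fin k → ℝ)).congr
          (fun u hu => hGzero u hu) (hGzero 0 ⟨le_rfl, hr.le⟩)
      have hu := uniqueDiffOn_Icc hr 0 ⟨le_rfl, hr.le⟩
      rw [← hd'.derivWithin hu, hz.derivWithin hu]
    · -- 0 < t
      have hsub : Set.uIcc (0:ℝ) t ⊆ Set.Icc 0 r := by
        rw [Set.uIcc_of_le ht.1]
        exact Set.Icc_subset_Icc le_rfl ht.2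
      have hmeas : StronglyMeasurableAtFilter h (nhdsWithin t (Set.Iic t)) volume :=
        ⟨Set.Icc 0 r, Icc_mem_nhdsLE_of_mem ⟨h0, ht.2⟩,
          hhc.aestronglyMeasurable measurableSet_Icc⟩
      have hcw : ContinuousWithinAt h (Set.Iic t) t :=
        (hhc t ht).mono_of_mem_nhdsWithin (Icc_mem_nhdsLE_of_mem ⟨h0, ht.2⟩)
      have hint : IntervalIntegrable h volume 0 t := (hhc.mono hsub).intervalIntegrable
      have hd : HasDerivWithinAt (fun u => ∫ s in (0:ℝ)..u, h s) (h t) (Set.Iic t) t :=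
        intervalIntegral.integral_hasDerivWithinAt_right hint hmeas hcw
      have hd' : HasDerivWithinAt (fun u => ∫ s in (0:ℝ)..u, h s) (h t)
          (Set.Icc 0 t) t := hd.mono Set.Icc_subset_Iic_self
      have hz : HasDerivWithinAt (fun u => ∫ s in (0:ℝ)..u, h s) 0 (Set.Icc 0 t) t := by
        refine (hasDerivWithinAt_const t (Set.Icc 0 t) (0 : Fin k → ℝ)).congr
          (fun u hu => hGzero u ⟨hu.1, hu.2.trans ht.2⟩) (hGzero t ht)
      have hu := uniqueDiffOn_Icc h0 t ⟨h0.le, le_rfl⟩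
      rw [← hd'.derivWithin hu, hz.derivWithin hu]
  -- compactness: trajectory in O with margin
  have htraj : IsCompact ((fun t => (x t, y t)) '' Set.Icc 0 r) :=
    isCompact_Icc.image_of_continuousOn (hxc.prodMk hyc)
  obtain ⟨ε, hε, hthick⟩ := htraj.exists_thickening_subset_open hO
    (by rintro p ⟨t, ht, rfl⟩; exact hinO t ht)
  obtain ⟨M2, hM2⟩ := IsCompact.exists_bound_of_continuousOn isCompact_Icc
    ((mulVecCLM (n := n) ζ).continuous.comp_continuousOn hΦc)
  have hM2' : ∀ t ∈ Set.Icc (0:ℝ) r, ‖Φ t *ᵥ ζ‖ ≤ M2 := by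
    intro t ht; simpa using hM2 t ht
  have hM2nn : (0:ℝ) ≤ M2 := le_trans (norm_nonneg _) (hM2' 0 ⟨le_rfl, hr.le⟩)
  set lam : ℝ := ε / (2 * (M2 + 1)) with hlamdef
  have hlam : 0 < lam := div_pos hε (by linarith)
  refine ⟨lam, hlam, ?_, ?_, ?_⟩
  · simp only [ne_eq, add_eq_left]
    exact smul_ne_zero hlam.ne' hζ
  · simp [hΦ0, hθ0, Matrix.one_mulVec]
  · intro t ht
    have hxt : Φ t *ᵥ (x₀ + lam • ζ) + θ t = x t + lam • (Φ t *ᵥ ζ) := by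
      rw [hxeq t ht, Matrix.mulVec_add, Matrix.mulVec_smul]
      abel
    refine ⟨hgderiv _ t ht, ?_, ?_⟩
    · have : f t + (C t)ᵀ *ᵥ (Φ t *ᵥ (x₀ + lam • ζ) + θ t) = f t + (C t)ᵀ *ᵥ x t := by
        rw [hxt, Matrix.mulVec_add, Matrix.mulVec_smul]
        have := hCΦζ t ht
        simp only [hhdef] at this
        rw [this]
        simp
      rw [this]
      exact hy t ht
    · apply hthick
      rw [Metric.mem_thickening_iff]
      refine ⟨(x t, y t), Set.mem_image_of_mem _ ht, ?_⟩
      rw [hxt, Prod.dist_eq]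
      have hd1 : dist (x t + lam • (Φ t *ᵥ ζ)) (x t) = ‖lam • (Φ t *ᵥ ζ)‖ := by
        rw [dist_eq_norm]; congr 1; abel
      have : dist (y t) (y t) = 0 := dist_self _
      rw [this, hd1]
      have hb1 : ‖lam • (Φ t *ᵥ ζ)‖ ≤ lam * M2 := by
        rw [norm_smul, Real.norm_eq_abs, abs_of_pos hlam]
        exact mul_le_mul_of_nonneg_left (hM2' t ht) hlam.le
      have hb2 : lam * M2 < ε := by
        rw [hlamdef]
        rw [div_mul_eq_mul_div, div_lt_iff₀ (by linarith : (0:ℝ) < 2 * (M2 + 1))]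
        nlinarith
      have : max ‖lam • (Φ t *ᵥ ζ)‖ 0 = ‖lam • (Φ t *ᵥ ζ)‖ := max_eq_left (norm_nonneg _)
      rw [this]
      exact lt_of_le_of_lt hb1 hb2
end
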